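/- arXiv:2405.00842 — 2 statements merged into one kernel-verified Lean document; each statement's English description precedes it below -/
import Mathlib

section
/- For every γ ≥ 1, the S-CuSum stopping time T_S with thresholds b0 = bC = log γ satisfies both E_∞[T_S] ≥ γ and inf_{ν≥1} E_{ν,μC}[T_S] ≥ γ. -/
open MeasureTheory ProbabilityTheory Filter Set
open scoped ENNReal NNReal

noncomputable section

namespace QCDStmt

variable {E : Type*} [MeasurableSpace E]

/-- `P` is the product probability measure under which the coordinates are independent,
`X_t ∼ μ0` for `t < ν` and `X_t ∼ μpost` for `t ≥ ν` (coordinate `0` is a dummy). -/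
def IsChangeMeasure (μ0 μpost : Measure E) (ν : ℕ) (P : Measure (ℕ → E)) : Prop :=
  IsProbabilityMeasure P ∧
    (∀ t : ℕ, Measure.map (fun ω : ℕ → E => ω t) P = if t < ν then μ0 else μpost) ∧
    iIndepFun (fun t (ω : ℕ → E) => ω t) P

/-- Expected value (possibly infinite) of a `ℕ∞`-valued random time. -/
def expTime (P : Measure (ℕ → E)) (T : (ℕ → E) → ℕ∞) : ℝ≥0∞ :=
  ∫⁻ ω, (T ω : ℝ≥0∞) ∂P

/-- The CuSum recursion: `c 0 = 0`, `c t = max (c (t-1) + w t) 0` (increments indexed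
from `1`). -/
def cusum (w : ℕ → ℝ) : ℕ → ℝ
  | 0 => 0
  | t + 1 => max (cusum w t + w (t + 1)) 0

/-- Log-likelihood ratio increment `W_t = log (dμB/dμ0)(X_t)`. -/
def Wstat (μ0 μB : Measure E) (t : ℕ) (ω : ℕ → E) : ℝ :=
  Real.log ((μB.rnDeriv μ0) (ω t)).toReal

/-- Log-likelihood ratio increment `Λ_t = log (dμB/dμC)(X_t)`. -/
def Lstat (μC μB : Measure E) (t : ℕ) (ω : ℕ → E) : ℝ :=
  Real.log ((μB.rnDeriv μC) (ω t)).toReal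

/-- The first stage stopping time `T_W = inf {t ≥ 1 : c_t ≥ b0}` of S-CuSum. -/
def TW (μ0 μB : Measure E) (b0 : ℝ) (ω : ℕ → E) : ℕ∞ :=
  sInf {s : ℕ∞ | ∃ t : ℕ, s = (t : ℕ∞) ∧ 1 ≤ t ∧ b0 ≤ cusum (fun i => Wstat μ0 μB i ω) t}

/-- The second-stage statistic of S-CuSum: `d n = 0` and `d t = max (d (t-1) + Λ t) 0`
for `t > n`, where `n` is the time the first stage stopped. -/
def dstat (lam : ℕ → ℝ) (n t : ℕ) : ℝ :=
  cusum (fun i => lam (n + i)) (t - n)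

/-- The S-CuSum stopping time `T_S = inf {t > T_W : d_t ≥ bC}` (`∞` if `T_W = ∞` or the
set is empty). -/
def TS (μ0 μC μB : Measure E) (b0 bC : ℝ) (ω : ℕ → E) : ℕ∞ :=
  sInf {s : ℕ∞ | ∃ t : ℕ, s = (t : ℕ∞) ∧ TW μ0 μB b0 ω < (t : ℕ∞) ∧
    bC ≤ dstat (fun i => Lstat μC μB i ω) (TW μ0 μB b0 ω).toNat t}

/-- The KL divergence `D(μ‖ν)` is finite (the log-likelihood ratio is `μ`-integrable). -/
def FinKL (μ ν : Measure E) : Prop :=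
  Integrable (fun x => Real.log (μ.rnDeriv ν x).toReal) μ

set_option linter.unusedSectionVars false
set_option linter.unnecessarySimpa false

/-! ### Auxiliary machinery for the proof -/

section Aux

lemma cusum_nonneg (w : ℕ → ℝ) (t : ℕ) : 0 ≤ cusum w t := by
  cases t <;> simp [cusum]

lemma cusum_congr {w w' : ℕ → ℝ} : ∀ t : ℕ, (∀ i, 1 ≤ i → i ≤ t → w i = w' i) →
    cusum w t = cusum w' t := by
  intro t
  induction t with
  | zero => intro _; rfl
  | succ t ih =>
    intro h
    simp only [cusum]
    rw [ih (fun i h1 h2 => h i h1 (h2.trans (Nat.le_succ t))), h (t + 1) (by omega) le_rfl]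

lemma exists_suffix_of_cusum {w : ℕ → ℝ} :
    ∀ t : ℕ, ∀ b : ℝ, 0 < b → b ≤ cusum w t →
      ∃ k, 1 ≤ k ∧ k ≤ t ∧ b ≤ ∑ i ∈ Finset.Icc k t, w i := by
  intro t
  induction t with
  | zero => intro b hb h; simp only [cusum] at h; exact absurd h (by linarith)
  | succ t ih =>
    intro b hb h
    have h' : b ≤ cusum w t + w (t + 1) := by
      simp only [cusum, le_max_iff] at h
      rcases h with h | h
      · exact h
      · linarith
    by_cases hc : b - w (t + 1) ≤ 0
    · refine ⟨t + 1, by omega, le_rfl, ?_⟩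
      rw [Finset.Icc_self, Finset.sum_singleton]
      linarith
    · obtain ⟨k, hk1, hk2, hk3⟩ := ih (b - w (t + 1)) (by linarith) (by linarith)
      refine ⟨k, hk1, hk2.trans (Nat.le_succ t), ?_⟩
      rw [Finset.sum_Icc_succ_top (by omega)]
      linarith

lemma sInf_coeSet_eq (p : ℕ → Prop) (h : ∃ n, p n) :
    sInf {s : ℕ∞ | ∃ t : ℕ, s = (t : ℕ∞) ∧ p t} = ((sInf {t | p t} : ℕ) : ℕ∞) := by
  apply le_antisymm
  · exact sInf_le ⟨sInf {t | p t}, rfl, Nat.sInf_mem h⟩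
  · apply le_sInf
    rintro s ⟨t, rfl, hp⟩
    exact_mod_cast Nat.sInf_le hp

lemma sInf_coeSet_empty (p : ℕ → Prop) (h : ¬ ∃ n, p n) :
    sInf {s : ℕ∞ | ∃ t : ℕ, s = (t : ℕ∞) ∧ p t} = ⊤ := by
  have : {s : ℕ∞ | ∃ t : ℕ, s = (t : ℕ∞) ∧ p t} = ∅ := by
    ext s
    simp only [Set.mem_setOf_eq, Set.mem_empty_iff_false, iff_false, not_exists]
    rintro t ⟨rfl, hp⟩
    exact h ⟨t, hp⟩
  rw [this, sInf_empty]

lemma sInf_coeSet_eq_coe_iff (p : ℕ → Prop) (n : ℕ) :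
    sInf {s : ℕ∞ | ∃ t : ℕ, s = (t : ℕ∞) ∧ p t} = (n : ℕ∞) ↔ p n ∧ ∀ m < n, ¬ p m := by
  constructor
  · intro h
    have hne : ∃ t, p t := by
      by_contra hc
      rw [sInf_coeSet_empty p hc] at h
      exact (by simp : ((⊤ : ℕ∞) ≠ (n : ℕ∞))) h
    rw [sInf_coeSet_eq p hne] at h
    have hn : sInf {t | p t} = n := by exact_mod_cast h
    refine ⟨hn ▸ Nat.sInf_mem hne, fun m hm => ?_⟩
    exact Nat.notMem_of_lt_sInf (lt_of_lt_of_le hm (le_of_eq hn.symm))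
  · rintro ⟨hp, hmin⟩
    rw [sInf_coeSet_eq p ⟨n, hp⟩]
    have : sInf {t | p t} = n := by
      apply le_antisymm (Nat.sInf_le hp)
      by_contra hc
      exact hmin _ (Nat.lt_of_not_le hc) (Nat.sInf_mem ⟨n, hp⟩)
    rw [this]

lemma sInf_coeSet_le_coe_iff (p : ℕ → Prop) (n : ℕ) :
    sInf {s : ℕ∞ | ∃ t : ℕ, s = (t : ℕ∞) ∧ p t} ≤ (n : ℕ∞) ↔ ∃ m ≤ n, p m := by
  constructor
  · intro h
    have hne : ∃ t, p t := by
      by_contra hc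
      rw [sInf_coeSet_empty p hc] at h
      exact absurd h (by simp)
    rw [sInf_coeSet_eq p hne] at h
    exact ⟨sInf {t | p t}, by exact_mod_cast h, Nat.sInf_mem hne⟩
  · rintro ⟨m, hm, hp⟩
    exact le_trans (sInf_le ⟨m, rfl, hp⟩) (by exact_mod_cast hm)

lemma enat_exists_coe_of_lt_coe {s : ℕ∞} {n : ℕ} (h : s < (n : ℕ∞)) :
    ∃ m : ℕ, s = (m : ℕ∞) ∧ m < n := by
  lift s to ℕ using (h.trans (by exact_mod_cast lt_top_iff_ne_top.2 (by simp) : (n:ℕ∞) < ⊤)).ne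
  exact ⟨s, rfl, by exact_mod_cast h⟩

end Aux
section Core

variable (μ0 μC μB : Measure E)

/-- Likelihood-ratio increments with denominators matching the true marginals. -/
def ellF (ν' : ℕ∞) (i : ℕ) (x : E) : ℝ≥0∞ :=
  if (i : ℕ∞) < ν' then μB.rnDeriv μ0 x else μB.rnDeriv μC x

/-- The true marginal of coordinate `i`. -/
def marF (ν' : ℕ∞) (i : ℕ) : Measure E :=
  if (i : ℕ∞) < ν' then μ0 else μC

/-- Shiryaev–Roberts-type statistic restarted after time `m`. -/
def DSR (ℓ : ℕ → E → ℝ≥0∞) (m n : ℕ) (ω : ℕ → E) : ℝ≥0∞ :=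
  ∑ k ∈ Finset.Icc (m + 1) n, ∏ i ∈ Finset.Icc k n, ℓ i (ω i)

/-- The supermartingale-like process dominating the S-CuSum statistics. -/
def ZP (b0 : ℝ) (ν' : ℕ∞) (ℓ : ℕ → E → ℝ≥0∞) (t : ℕ) (ω : ℕ → E) : ℝ≥0∞ :=
  if TW μ0 μB b0 ω < (t : ℕ∞) then
    (if TW μ0 μB b0 ω < ν' then DSR ℓ 0 (TW μ0 μB b0 ω).toNat ω
     else DSR ℓ (TW μ0 μB b0 ω).toNat t ω)
  else DSR ℓ 0 t ω

/-- `f` depends only on coordinates `≤ t`. -/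
def DepOn {α : Type*} (f : (ℕ → E) → α) (t : ℕ) : Prop :=
  ∀ ω ω' : ℕ → E, (∀ i ≤ t, ω i = ω' i) → f ω = f ω'

variable {μ0 μC μB}

lemma DSR_zero (ℓ : ℕ → E → ℝ≥0∞) (m : ℕ) (ω : ℕ → E) : DSR ℓ m 0 ω = 0 := by
  simp [DSR]

lemma DSR_self (ℓ : ℕ → E → ℝ≥0∞) (m : ℕ) (ω : ℕ → E) : DSR ℓ m m ω = 0 := by
  simp [DSR]

lemma DSR_succ (ℓ : ℕ → E → ℝ≥0∞) {m n : ℕ} (h : m ≤ n) (ω : ℕ → E) :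
    DSR ℓ m (n + 1) ω = ℓ (n + 1) (ω (n + 1)) * (1 + DSR ℓ m n ω) := by
  unfold DSR
  rw [Finset.sum_Icc_succ_top (by omega)]
  have hcongr : ∀ k ∈ Finset.Icc (m + 1) n,
      (∏ i ∈ Finset.Icc k (n + 1), ℓ i (ω i))
        = (∏ i ∈ Finset.Icc k n, ℓ i (ω i)) * ℓ (n + 1) (ω (n + 1)) := by
    intro k hk
    have hk' : k ≤ n + 1 := le_trans (Finset.mem_Icc.1 hk).2 (Nat.le_succ n)
    rw [Finset.prod_Icc_succ_top hk']
  rw [Finset.sum_congr rfl hcongr, ← Finset.sum_mul]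
  rw [Finset.Icc_self, Finset.prod_singleton]
  ring

lemma DSR_le_DSR {ℓ : ℕ → E → ℝ≥0∞} {m m' n : ℕ} (h : m' ≤ m) (ω : ℕ → E) :
    DSR ℓ m n ω ≤ DSR ℓ m' n ω :=
  Finset.sum_le_sum_of_subset (Finset.Icc_subset_Icc (by omega) le_rfl)

lemma single_le_DSR {ℓ : ℕ → E → ℝ≥0∞} {m n k : ℕ} (h1 : m + 1 ≤ k) (h2 : k ≤ n) (ω : ℕ → E) :
    (∏ i ∈ Finset.Icc k n, ℓ i (ω i)) ≤ DSR ℓ m n ω := by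
  unfold DSR
  exact Finset.single_le_sum (f := fun k => ∏ i ∈ Finset.Icc k n, ℓ i (ω i))
    (fun _ _ => zero_le) (Finset.mem_Icc.2 ⟨h1, h2⟩)

lemma measurable_DSR {ℓ : ℕ → E → ℝ≥0∞} (hℓ : ∀ i, Measurable (ℓ i)) (m n : ℕ) :
    Measurable (DSR ℓ m n) := by
  apply Finset.measurable_sum
  intro k _
  apply Finset.measurable_prod
  intro i _
  exact (hℓ i).comp (measurable_pi_apply i)

lemma depOn_DSR (ℓ : ℕ → E → ℝ≥0∞) (m n : ℕ) : DepOn (DSR ℓ m n) n := by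
  intro ω ω' hag
  unfold DSR
  refine Finset.sum_congr rfl fun k _ => Finset.prod_congr rfl fun i hi => ?_
  rw [hag i (Finset.mem_Icc.1 hi).2]

lemma measurable_cusum {Ω : Type*} [MeasurableSpace Ω] {w : ℕ → Ω → ℝ}
    (hw : ∀ i, Measurable (w i)) (t : ℕ) :
    Measurable (fun ω => cusum (fun i => w i ω) t) := by
  induction t with
  | zero => simpa [cusum] using measurable_const
  | succ t ih =>
    simp only [cusum]
    exact (ih.add (hw (t + 1))).max measurable_const

lemma measurable_Wstat (i : ℕ) : Measurable (Wstat μ0 μB i) :=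
  Real.measurable_log.comp ((ENNReal.measurable_toReal.comp
    (μB.measurable_rnDeriv μ0)).comp (measurable_pi_apply i))

lemma measurable_Lstat (i : ℕ) : Measurable (Lstat μC μB i) :=
  Real.measurable_log.comp ((ENNReal.measurable_toReal.comp
    (μB.measurable_rnDeriv μC)).comp (measurable_pi_apply i))

/-! ### Characterizations of `TW` and `TS` -/

lemma TW_eq_coe_iff (b0 : ℝ) (ω : ℕ → E) (n : ℕ) :
    TW μ0 μB b0 ω = (n : ℕ∞) ↔
      (1 ≤ n ∧ b0 ≤ cusum (fun i => Wstat μ0 μB i ω) n) ∧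
        ∀ m < n, ¬ (1 ≤ m ∧ b0 ≤ cusum (fun i => Wstat μ0 μB i ω) m) :=
  sInf_coeSet_eq_coe_iff _ n

lemma TW_le_coe_iff (b0 : ℝ) (ω : ℕ → E) (n : ℕ) :
    TW μ0 μB b0 ω ≤ (n : ℕ∞) ↔
      ∃ m ≤ n, 1 ≤ m ∧ b0 ≤ cusum (fun i => Wstat μ0 μB i ω) m :=
  sInf_coeSet_le_coe_iff _ n

lemma TS_eq_coe_iff (b0 bC : ℝ) (ω : ℕ → E) (n : ℕ) :
    TS μ0 μC μB b0 bC ω = (n : ℕ∞) ↔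
      (TW μ0 μB b0 ω < (n : ℕ∞) ∧
        bC ≤ dstat (fun i => Lstat μC μB i ω) (TW μ0 μB b0 ω).toNat n) ∧
        ∀ m < n, ¬ (TW μ0 μB b0 ω < (m : ℕ∞) ∧
          bC ≤ dstat (fun i => Lstat μC μB i ω) (TW μ0 μB b0 ω).toNat m) :=
  sInf_coeSet_eq_coe_iff _ n

lemma TS_le_coe_iff (b0 bC : ℝ) (ω : ℕ → E) (n : ℕ) :
    TS μ0 μC μB b0 bC ω ≤ (n : ℕ∞) ↔
      ∃ m ≤ n, TW μ0 μB b0 ω < (m : ℕ∞) ∧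
        bC ≤ dstat (fun i => Lstat μC μB i ω) (TW μ0 μB b0 ω).toNat m :=
  sInf_coeSet_le_coe_iff _ n

end Core
section Meas

variable {μ0 μC μB : Measure E}

lemma cusumW_agree {t : ℕ} {ω ω' : ℕ → E} (hag : ∀ i ≤ t, ω i = ω' i)
    {s : ℕ} (hs : s ≤ t) :
    cusum (fun i => Wstat μ0 μB i ω) s = cusum (fun i => Wstat μ0 μB i ω') s := by
  apply cusum_congr
  intro i _ h2
  simp only [Wstat]
  rw [hag i (h2.trans hs)]

lemma dstat_agree {t : ℕ} {ω ω' : ℕ → E} (hag : ∀ i ≤ t, ω i = ω' i)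
    {m s : ℕ} (hs : s ≤ t) :
    dstat (fun i => Lstat μC μB i ω) m s = dstat (fun i => Lstat μC μB i ω') m s := by
  unfold dstat
  rcases le_or_gt m s with hms | hms
  · apply cusum_congr
    intro i _ h2
    simp only [Lstat]
    rw [hag (m + i) (by omega)]
  · rw [Nat.sub_eq_zero_of_le hms.le]
    simp [cusum]

lemma pW_agree {b0 : ℝ} {t : ℕ} {ω ω' : ℕ → E} (hag : ∀ i ≤ t, ω i = ω' i)
    {s : ℕ} (hs : s ≤ t) :
    (1 ≤ s ∧ b0 ≤ cusum (fun i => Wstat μ0 μB i ω) s) ↔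
      (1 ≤ s ∧ b0 ≤ cusum (fun i => Wstat μ0 μB i ω') s) := by
  rw [cusumW_agree hag hs]

lemma TW_eq_agree {b0 : ℝ} {t : ℕ} {ω ω' : ℕ → E} (hag : ∀ i ≤ t, ω i = ω' i)
    {m : ℕ} (hm : m ≤ t) :
    TW μ0 μB b0 ω = (m : ℕ∞) ↔ TW μ0 μB b0 ω' = (m : ℕ∞) := by
  rw [TW_eq_coe_iff, TW_eq_coe_iff]
  constructor
  · rintro ⟨h1, h2⟩
    exact ⟨(pW_agree hag hm).1 h1, fun k hk hc =>
      h2 k hk ((pW_agree hag (le_trans hk.le hm)).2 hc)⟩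
  · rintro ⟨h1, h2⟩
    exact ⟨(pW_agree hag hm).2 h1, fun k hk hc =>
      h2 k hk ((pW_agree hag (le_trans hk.le hm)).1 hc)⟩

lemma TW_le_agree {b0 : ℝ} {t : ℕ} {ω ω' : ℕ → E} (hag : ∀ i ≤ t, ω i = ω' i)
    {m : ℕ} (hm : m ≤ t) :
    TW μ0 μB b0 ω ≤ (m : ℕ∞) ↔ TW μ0 μB b0 ω' ≤ (m : ℕ∞) := by
  rw [TW_le_coe_iff, TW_le_coe_iff]
  constructor
  · rintro ⟨k, hk, hp⟩
    exact ⟨k, hk, (pW_agree hag (hk.trans hm)).1 hp⟩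
  · rintro ⟨k, hk, hp⟩
    exact ⟨k, hk, (pW_agree hag (hk.trans hm)).2 hp⟩

lemma TS_le_agree {b0 bC : ℝ} {t : ℕ} {ω ω' : ℕ → E} (hag : ∀ i ≤ t, ω i = ω' i)
    {n : ℕ} (hn : n ≤ t) :
    TS μ0 μC μB b0 bC ω ≤ (n : ℕ∞) ↔ TS μ0 μC μB b0 bC ω' ≤ (n : ℕ∞) := by
  rw [TS_le_coe_iff, TS_le_coe_iff]
  constructor
  · rintro ⟨m, hm, hlt, hd⟩
    obtain ⟨j, hj, hjm⟩ := enat_exists_coe_of_lt_coe hlt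
    rw [hj, ENat.toNat_coe] at hd
    have hj' : TW μ0 μB b0 ω' = (j : ℕ∞) := (TW_eq_agree hag (by omega)).1 hj
    refine ⟨m, hm, ?_, ?_⟩
    · rw [hj']; exact_mod_cast hjm
    · rw [hj', ENat.toNat_coe, ← dstat_agree hag (hm.trans hn)]
      exact hd
  · rintro ⟨m, hm, hlt, hd⟩
    obtain ⟨j, hj, hjm⟩ := enat_exists_coe_of_lt_coe hlt
    rw [hj, ENat.toNat_coe] at hd
    have hj' : TW μ0 μB b0 ω = (j : ℕ∞) := (TW_eq_agree hag (by omega)).2 hj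
    refine ⟨m, hm, ?_, ?_⟩
    · rw [hj']; exact_mod_cast hjm
    · rw [hj', ENat.toNat_coe, dstat_agree hag (hm.trans hn)]
      exact hd

lemma measurableSet_cusumW_ge (b0 : ℝ) (s : ℕ) :
    MeasurableSet {ω : ℕ → E | b0 ≤ cusum (fun i => Wstat μ0 μB i ω) s} :=
  measurableSet_le measurable_const (measurable_cusum (fun i => measurable_Wstat i) s)

lemma measurableSet_TW_eq (b0 : ℝ) (n : ℕ) :
    MeasurableSet {ω : ℕ → E | TW μ0 μB b0 ω = (n : ℕ∞)} := by
  have hset : {ω : ℕ → E | TW μ0 μB b0 ω = (n : ℕ∞)} =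
      ({ω : ℕ → E | 1 ≤ n} ∩ {ω | b0 ≤ cusum (fun i => Wstat μ0 μB i ω) n}) ∩
        ⋂ m ∈ Finset.range n,
          (({ω : ℕ → E | 1 ≤ m} ∩ {ω | b0 ≤ cusum (fun i => Wstat μ0 μB i ω) m}))ᶜ := by
    ext ω
    simp only [TW_eq_coe_iff, Set.mem_setOf_eq, Set.mem_inter_iff, Set.mem_iInter,
      Set.mem_compl_iff, Finset.mem_range, not_and]
  rw [hset]
  refine (MeasurableSet.inter (MeasurableSet.const _) (measurableSet_cusumW_ge b0 n)).inter ?_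
  exact MeasurableSet.biInter (Finset.range n).countable_toSet fun m _ =>
    ((MeasurableSet.const _).inter (measurableSet_cusumW_ge b0 m)).compl

lemma measurableSet_TW_le (b0 : ℝ) (n : ℕ) :
    MeasurableSet {ω : ℕ → E | TW μ0 μB b0 ω ≤ (n : ℕ∞)} := by
  have hset : {ω : ℕ → E | TW μ0 μB b0 ω ≤ (n : ℕ∞)} =
      ⋃ m ∈ Finset.range (n + 1), {ω : ℕ → E | TW μ0 μB b0 ω = (m : ℕ∞)} := by
    ext ω
    simp only [Set.mem_setOf_eq, Set.mem_iUnion, Finset.mem_range]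
    constructor
    · intro h
      obtain ⟨m, hm, hlt⟩ := enat_exists_coe_of_lt_coe
        (lt_of_le_of_lt h (by exact_mod_cast Nat.lt_succ_self n))
      exact ⟨m, hlt, hm⟩
    · rintro ⟨m, hm, hq⟩
      rw [hq]
      exact_mod_cast Nat.lt_succ_iff.1 hm
  rw [hset]
  exact MeasurableSet.biUnion (Finset.range (n + 1)).countable_toSet fun m _ =>
    measurableSet_TW_eq b0 m

lemma measurableSet_dstat_ge (bC : ℝ) (j m : ℕ) :
    MeasurableSet {ω : ℕ → E | bC ≤ dstat (fun i => Lstat μC μB i ω) j m} := by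
  unfold dstat
  exact measurableSet_le measurable_const
    (measurable_cusum (fun i => measurable_Lstat (j + i)) (m - j))

lemma measurableSet_TS_le (b0 bC : ℝ) (n : ℕ) :
    MeasurableSet {ω : ℕ → E | TS μ0 μC μB b0 bC ω ≤ (n : ℕ∞)} := by
  have hset : {ω : ℕ → E | TS μ0 μC μB b0 bC ω ≤ (n : ℕ∞)} =
      ⋃ m ∈ Finset.range (n + 1), ⋃ j ∈ Finset.range m,
        ({ω : ℕ → E | TW μ0 μB b0 ω = (j : ℕ∞)} ∩
          {ω | bC ≤ dstat (fun i => Lstat μC μB i ω) j m}) := by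
    ext ω
    simp only [Set.mem_setOf_eq, TS_le_coe_iff, Set.mem_iUnion, Finset.mem_range,
      Set.mem_inter_iff]
    constructor
    · rintro ⟨m, hm, hlt, hd⟩
      obtain ⟨j, hj, hjm⟩ := enat_exists_coe_of_lt_coe hlt
      rw [hj, ENat.toNat_coe] at hd
      exact ⟨m, by omega, j, hjm, hj, hd⟩
    · rintro ⟨m, hm, j, hjm, hj, hd⟩
      refine ⟨m, by omega, ?_, ?_⟩
      · rw [hj]; exact_mod_cast hjm
      · rw [hj, ENat.toNat_coe]; exact hd
  rw [hset]
  exact MeasurableSet.biUnion (Finset.range (n + 1)).countable_toSet fun m _ =>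
    MeasurableSet.biUnion (Finset.range m).countable_toSet fun j _ =>
      (measurableSet_TW_eq b0 j).inter (measurableSet_dstat_ge bC j m)

lemma enat_eq_set {Ω : Type*} (f : Ω → ℕ∞) (n : ℕ) :
    {ω | f ω = (n : ℕ∞)} =
      {ω | f ω ≤ (n : ℕ∞)} ∩ ⋂ m ∈ Finset.range n, {ω | f ω ≤ (m : ℕ∞)}ᶜ := by
  ext ω
  simp only [Set.mem_setOf_eq, Set.mem_inter_iff, Set.mem_iInter, Set.mem_compl_iff,
    Finset.mem_range]
  constructor
  · intro h
    refine ⟨le_of_eq h, fun m hm hc => ?_⟩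
    rw [h] at hc
    exact absurd hc (by exact_mod_cast Nat.not_le.2 hm)
  · rintro ⟨hle, hmin⟩
    obtain ⟨k, hk, hkn⟩ := enat_exists_coe_of_lt_coe
      (lt_of_le_of_lt hle (by exact_mod_cast Nat.lt_succ_self n))
    have : ¬ k < n := fun hlt => hmin k hlt (le_of_eq hk)
    have : k = n := by omega
    rw [hk, this]

lemma measurableSet_TS_eq (b0 bC : ℝ) (n : ℕ) :
    MeasurableSet {ω : ℕ → E | TS μ0 μC μB b0 bC ω = (n : ℕ∞)} := by
  rw [enat_eq_set]
  exact (measurableSet_TS_le b0 bC n).inter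
    (MeasurableSet.biInter (Finset.range n).countable_toSet fun m _ =>
      (measurableSet_TS_le b0 bC m).compl)

lemma measurableSet_TS_top (b0 bC : ℝ) :
    MeasurableSet {ω : ℕ → E | TS μ0 μC μB b0 bC ω = ⊤} := by
  have hset : {ω : ℕ → E | TS μ0 μC μB b0 bC ω = ⊤} =
      (⋃ n : ℕ, {ω : ℕ → E | TS μ0 μC μB b0 bC ω ≤ (n : ℕ∞)})ᶜ := by
    ext ω
    simp only [Set.mem_setOf_eq, Set.mem_compl_iff, Set.mem_iUnion, not_exists]
    constructor
    · rintro h n hc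
      rw [h] at hc
      exact absurd hc (by simp)
    · intro h
      by_contra hc
      obtain ⟨k, hk⟩ := (WithTop.ne_top_iff_exists).1 hc
      exact h k (le_of_eq hk.symm)
  rw [hset]
  exact (MeasurableSet.iUnion fun n => measurableSet_TS_le b0 bC n).compl

end Meas
section Step

variable {μ0 μC μB : Measure E}

lemma TW_lt_coe_iff (b0 : ℝ) (ω : ℕ → E) (t : ℕ) :
    TW μ0 μB b0 ω < (t : ℕ∞) ↔ ∃ m < t, TW μ0 μB b0 ω = (m : ℕ∞) := by
  constructor
  · intro h
    obtain ⟨m, hm, hmt⟩ := enat_exists_coe_of_lt_coe h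
    exact ⟨m, hmt, hm⟩
  · rintro ⟨m, hmt, hm⟩
    rw [hm]
    exact_mod_cast hmt

lemma measurableSet_TW_lt (b0 : ℝ) (t : ℕ) :
    MeasurableSet {ω : ℕ → E | TW μ0 μB b0 ω < (t : ℕ∞)} := by
  have hset : {ω : ℕ → E | TW μ0 μB b0 ω < (t : ℕ∞)} =
      ⋃ m ∈ Finset.range t, {ω : ℕ → E | TW μ0 μB b0 ω = (m : ℕ∞)} := by
    ext ω
    simp only [Set.mem_setOf_eq, Set.mem_iUnion, Finset.mem_range, TW_lt_coe_iff]
    tauto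
  rw [hset]
  exact MeasurableSet.biUnion (Finset.range t).countable_toSet fun m _ =>
    measurableSet_TW_eq b0 m

lemma ZP_eq_sum (b0 : ℝ) (ν' : ℕ∞) (ℓ : ℕ → E → ℝ≥0∞) (t : ℕ) :
    ZP μ0 μB b0 ν' ℓ t = fun ω =>
      ({ω : ℕ → E | TW μ0 μB b0 ω < (t : ℕ∞)}ᶜ).indicator (DSR ℓ 0 t) ω +
        ∑ m ∈ Finset.range t, ({ω : ℕ → E | TW μ0 μB b0 ω = (m : ℕ∞)}).indicator
          (fun ω => if (m : ℕ∞) < ν' then DSR ℓ 0 m ω else DSR ℓ m t ω) ω := by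
  classical
  funext ω
  by_cases h : TW μ0 μB b0 ω < (t : ℕ∞)
  · obtain ⟨m, hmt, hm⟩ := (TW_lt_coe_iff b0 ω t).1 h
    rw [ZP, if_pos h, Set.indicator_of_notMem (by simpa using h), Finset.sum_eq_single m]
    · rw [Set.indicator_of_mem (by exact hm), hm, ENat.toNat_coe, zero_add]
    · intro k _ hk
      apply Set.indicator_of_notMem
      simp only [Set.mem_setOf_eq, hm]
      exact fun hc => hk (by exact_mod_cast hc.symm)
    · intro hc
      exact absurd (Finset.mem_range.2 hmt) hc
  · rw [ZP, if_neg h, Set.indicator_of_mem (by simpa using h)]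
    rw [Finset.sum_eq_zero]
    · rw [add_zero]
    · intro k hk
      apply Set.indicator_of_notMem
      simp only [Set.mem_setOf_eq]
      intro hc
      exact h ((TW_lt_coe_iff b0 ω t).2 ⟨k, Finset.mem_range.1 hk, hc⟩)

lemma measurable_ZP {ℓ : ℕ → E → ℝ≥0∞} (hℓ : ∀ i, Measurable (ℓ i)) (b0 : ℝ) (ν' : ℕ∞)
    (t : ℕ) : Measurable (ZP μ0 μB b0 ν' ℓ t) := by
  rw [ZP_eq_sum]
  apply Measurable.add
  · exact (measurable_DSR hℓ 0 t).indicator (measurableSet_TW_lt b0 t).compl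
  · apply Finset.measurable_sum
    intro m _
    apply Measurable.indicator _ (measurableSet_TW_eq b0 m)
    split_ifs
    · exact measurable_DSR hℓ 0 m
    · exact measurable_DSR hℓ m t

/-- The stopped process `Z_{T ∧ n}`. -/
def Zst (μ0 μC μB : Measure E) (b0 bC : ℝ) (ν' : ℕ∞) (ℓ : ℕ → E → ℝ≥0∞) (n : ℕ)
    (ω : ℕ → E) : ℝ≥0∞ :=
  if TS μ0 μC μB b0 bC ω ≤ (n : ℕ∞) then ZP μ0 μB b0 ν' ℓ (TS μ0 μC μB b0 bC ω).toNat ω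
  else ZP μ0 μB b0 ν' ℓ n ω

lemma Zst_eq_sum (b0 bC : ℝ) (ν' : ℕ∞) (ℓ : ℕ → E → ℝ≥0∞) (n : ℕ) :
    Zst μ0 μC μB b0 bC ν' ℓ n = fun ω =>
      (∑ t ∈ Finset.range (n + 1), ({ω : ℕ → E | TS μ0 μC μB b0 bC ω = (t : ℕ∞)}).indicator
        (ZP μ0 μB b0 ν' ℓ t) ω) +
      ({ω : ℕ → E | TS μ0 μC μB b0 bC ω ≤ (n : ℕ∞)}ᶜ).indicator (ZP μ0 μB b0 ν' ℓ n) ω := by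
  classical
  funext ω
  by_cases h : TS μ0 μC μB b0 bC ω ≤ (n : ℕ∞)
  · obtain ⟨m, hm, hmn⟩ := enat_exists_coe_of_lt_coe
      (lt_of_le_of_lt h (by exact_mod_cast Nat.lt_succ_self n))
    rw [Zst, if_pos h, Set.indicator_of_notMem (by simpa using h), add_zero,
      Finset.sum_eq_single m]
    · rw [Set.indicator_of_mem (by exact hm), hm, ENat.toNat_coe]
    · intro k _ hk
      apply Set.indicator_of_notMem
      simp only [Set.mem_setOf_eq, hm]
      exact fun hc => hk (by exact_mod_cast hc.symm)
    · intro hc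
      exact absurd (Finset.mem_range.2 hmn) hc
  · rw [Zst, if_neg h, Set.indicator_of_mem (by simpa using h), Finset.sum_eq_zero, zero_add]
    intro k hk
    apply Set.indicator_of_notMem
    simp only [Set.mem_setOf_eq]
    intro hc
    exact h (hc ▸ (by exact_mod_cast Nat.lt_succ_iff.1 (Finset.mem_range.1 hk)))

lemma measurable_Zst {ℓ : ℕ → E → ℝ≥0∞} (hℓ : ∀ i, Measurable (ℓ i)) (b0 bC : ℝ) (ν' : ℕ∞)
    (n : ℕ) : Measurable (Zst μ0 μC μB b0 bC ν' ℓ n) := by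
  rw [Zst_eq_sum]
  apply Measurable.add
  · exact Finset.measurable_sum _ fun t _ =>
      (measurable_ZP hℓ b0 ν' t).indicator (measurableSet_TS_eq b0 bC t)
  · exact (measurable_ZP hℓ b0 ν' n).indicator (measurableSet_TS_le b0 bC n).compl

end Step
section Indep

variable {μ0 μC μB : Measure E}

lemma lintegral_eval {P : Measure (ℕ → E)} {m : Measure E} {i : ℕ}
    (hmar : Measure.map (fun ω : ℕ → E => ω i) P = m) {g : E → ℝ≥0∞} (hg : Measurable g) :
    ∫⁻ ω, g (ω i) ∂P = ∫⁻ x, g x ∂m := by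
  rw [← hmar, lintegral_map hg (measurable_pi_apply i)]

lemma lintegral_mul_eval [Nonempty E] {P : Measure (ℕ → E)}
    (hind : iIndepFun (fun t (ω : ℕ → E) => ω t) P)
    (t : ℕ) {F : (ℕ → E) → ℝ≥0∞} (hF : Measurable F) (hdep : DepOn F t)
    {g : E → ℝ≥0∞} (hg : Measurable g) :
    ∫⁻ ω, F ω * g (ω (t + 1)) ∂P = (∫⁻ ω, F ω ∂P) * ∫⁻ ω, g (ω (t + 1)) ∂P := by
  classical
  have hdisj : Disjoint (Finset.range (t + 1)) ({t + 1} : Finset ℕ) := by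
    simp [Finset.disjoint_singleton_right]
  have hIF := hind.indepFun_finset (Finset.range (t + 1)) {t + 1} hdisj
    (fun i => measurable_pi_apply i)
  set φ : ((i : (Finset.range (t + 1) : Finset ℕ)) → E) → ℝ≥0∞ := fun x =>
    F (fun i => if h : i ∈ Finset.range (t + 1) then x ⟨i, h⟩ else Classical.arbitrary E)
    with hφdef
  set ψ : ((i : ({t + 1} : Finset ℕ)) → E) → ℝ≥0∞ := fun y =>
    g (y ⟨t + 1, Finset.mem_singleton_self _⟩) with hψdef
  have hφm : Measurable φ := by
    apply hF.comp
    apply measurable_pi_lambda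
    intro i
    by_cases h : i ∈ Finset.range (t + 1)
    · simpa [h] using measurable_pi_apply (⟨i, h⟩ : (Finset.range (t + 1) : Finset ℕ))
    · simpa [h] using measurable_const
  have hψm : Measurable ψ := hg.comp (measurable_pi_apply _)
  have hcomp := hIF.comp hφm hψm
  have h1 : (φ ∘ fun (ω : ℕ → E) (i : (Finset.range (t + 1) : Finset ℕ)) => ω (i : ℕ)) = F := by
    funext ω
    apply hdep
    intro i hi
    have h : i ∈ Finset.range (t + 1) := Finset.mem_range.2 (Nat.lt_succ_of_le hi)
    simp [h]
  have h2 : (ψ ∘ fun (ω : ℕ → E) (i : ({t + 1} : Finset ℕ)) => ω (i : ℕ)) =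
      fun ω : ℕ → E => g (ω (t + 1)) := rfl
  have key := lintegral_mul_eq_lintegral_mul_lintegral_of_indepFun
    (μ := P) (f := φ ∘ fun (ω : ℕ → E) i => ω (i : ℕ))
    (g := ψ ∘ fun (ω : ℕ → E) i => ω (i : ℕ)) (by rw [h1]; exact hF)
    (by rw [h2]; exact hg.comp (measurable_pi_apply _)) hcomp
  rw [h1, h2] at key
  simpa only [Pi.mul_apply] using key

lemma lintegral_ellF_le (ν' : ℕ∞) [IsProbabilityMeasure μB] (i : ℕ) :
    ∫⁻ x, ellF μ0 μC μB ν' i x ∂(marF μ0 μC ν' i) ≤ 1 := by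
  unfold ellF marF
  split_ifs
  · exact le_trans (Measure.lintegral_rnDeriv_le) (by simp)
  · exact le_trans (Measure.lintegral_rnDeriv_le) (by simp)

lemma measurable_ellF (ν' : ℕ∞) (i : ℕ) : Measurable (ellF μ0 μC μB ν' i) := by
  unfold ellF
  split_ifs
  · exact μB.measurable_rnDeriv μ0
  · exact μB.measurable_rnDeriv μC

/-- The coordinatewise good set on which the `rnDeriv`s are positive and finite. -/
def GoodE (μ0 μC μB : Measure E) : Set E :=
  {x | (μB.rnDeriv μ0 x ≠ 0 ∧ μB.rnDeriv μ0 x ≠ ⊤) ∧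
    (μB.rnDeriv μC x ≠ 0 ∧ μB.rnDeriv μC x ≠ ⊤)}

lemma measurableSet_GoodE : MeasurableSet (GoodE μ0 μC μB) := by
  unfold GoodE
  refine MeasurableSet.inter ?_ ?_ <;> refine MeasurableSet.inter ?_ ?_
  · exact ((μB.measurable_rnDeriv μ0) (measurableSet_singleton 0)).compl
  · exact ((μB.measurable_rnDeriv μ0) (measurableSet_singleton ⊤)).compl
  · exact ((μB.measurable_rnDeriv μC) (measurableSet_singleton 0)).compl
  · exact ((μB.measurable_rnDeriv μC) (measurableSet_singleton ⊤)).compl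

lemma GoodE_ae_of_marginal [IsFiniteMeasure μ0] [IsFiniteMeasure μC] [IsFiniteMeasure μB]
    (hac0C : μ0 ≪ μC) (hacC0 : μC ≪ μ0) (hac0B : μ0 ≪ μB) (hacB0 : μB ≪ μ0)
    (hacCB : μC ≪ μB) (hacBC : μB ≪ μC) (ν' : ℕ∞) (i : ℕ) :
    (marF μ0 μC ν' i) (GoodE μ0 μC μB)ᶜ = 0 := by
  have h0 : ∀ᵐ x ∂μ0, x ∈ GoodE μ0 μC μB := by
    have h1 : ∀ᵐ x ∂μ0, 0 < μB.rnDeriv μ0 x :=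
      (Measure.rnDeriv_pos hacB0).filter_mono hac0B.ae_le
    have h2 : ∀ᵐ x ∂μ0, μB.rnDeriv μ0 x ≠ ⊤ := by
      filter_upwards [Measure.rnDeriv_lt_top μB μ0] with x hx using hx.ne
    have h3 : ∀ᵐ x ∂μ0, 0 < μB.rnDeriv μC x :=
      (Measure.rnDeriv_pos hacBC).filter_mono hac0B.ae_le
    have h4 : ∀ᵐ x ∂μ0, μB.rnDeriv μC x ≠ ⊤ := by
      have := Measure.rnDeriv_lt_top μB μC
      filter_upwards [this.filter_mono hac0C.ae_le] with x hx using hx.ne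
    filter_upwards [h1, h2, h3, h4] with x hx1 hx2 hx3 hx4 using
      ⟨⟨hx1.ne', hx2⟩, ⟨hx3.ne', hx4⟩⟩
  have hCC : ∀ᵐ x ∂μC, x ∈ GoodE μ0 μC μB := by
    have h1 : ∀ᵐ x ∂μC, 0 < μB.rnDeriv μ0 x :=
      (Measure.rnDeriv_pos hacB0).filter_mono hacCB.ae_le
    have h2 : ∀ᵐ x ∂μC, μB.rnDeriv μ0 x ≠ ⊤ := by
      have := Measure.rnDeriv_lt_top μB μ0
      filter_upwards [this.filter_mono hacC0.ae_le] with x hx using hx.ne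
    have h3 : ∀ᵐ x ∂μC, 0 < μB.rnDeriv μC x :=
      (Measure.rnDeriv_pos hacBC).filter_mono hacCB.ae_le
    have h4 : ∀ᵐ x ∂μC, μB.rnDeriv μC x ≠ ⊤ := by
      filter_upwards [Measure.rnDeriv_lt_top μB μC] with x hx using hx.ne
    filter_upwards [h1, h2, h3, h4] with x hx1 hx2 hx3 hx4 using
      ⟨⟨hx1.ne', hx2⟩, ⟨hx3.ne', hx4⟩⟩
  unfold marF
  split_ifs
  · exact ae_iff.1 h0
  · exact ae_iff.1 hCC

/-- The global good set. -/
def GoodSet (μ0 μC μB : Measure E) : Set (ℕ → E) :=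
  {ω | ∀ i, 1 ≤ i → ω i ∈ GoodE μ0 μC μB}

lemma GoodSet_compl_null [IsFiniteMeasure μ0] [IsFiniteMeasure μC] [IsFiniteMeasure μB]
    {ν' : ℕ∞} {P : Measure (ℕ → E)}
    (hmar : ∀ i, Measure.map (fun ω : ℕ → E => ω i) P = marF μ0 μC ν' i)
    (hac0C : μ0 ≪ μC) (hacC0 : μC ≪ μ0) (hac0B : μ0 ≪ μB) (hacB0 : μB ≪ μ0)
    (hacCB : μC ≪ μB) (hacBC : μB ≪ μC) :
    P (GoodSet μ0 μC μB)ᶜ = 0 := by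
  have hsub : (GoodSet μ0 μC μB)ᶜ ⊆
      ⋃ i : ℕ, (fun ω : ℕ → E => ω i) ⁻¹' (GoodE μ0 μC μB)ᶜ := by
    intro ω hω
    simp only [GoodSet, Set.mem_compl_iff, Set.mem_setOf_eq] at hω
    push_neg at hω
    obtain ⟨i, _, hbad⟩ := hω
    exact Set.mem_iUnion.2 ⟨i, hbad⟩
  refine measure_mono_null hsub (measure_iUnion_null fun i => ?_)
  rw [← Measure.map_apply (measurable_pi_apply i) measurableSet_GoodE.compl, hmar i]
  exact GoodE_ae_of_marginal hac0C hacC0 hac0B hacB0 hacCB hacBC ν' i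

end Indep
section Crossing

variable {μ0 μC μB : Measure E}

lemma prod_ge_of_sum_log {f : ℕ → ℝ≥0∞} {s : Finset ℕ} (hf : ∀ i ∈ s, f i ≠ 0 ∧ f i ≠ ⊤)
    {γ : ℝ} (hγ : 0 < γ) (h : Real.log γ ≤ ∑ i ∈ s, Real.log (f i).toReal) :
    ENNReal.ofReal γ ≤ ∏ i ∈ s, f i := by
  have hpos : ∀ i ∈ s, 0 < (f i).toReal := fun i hi =>
    ENNReal.toReal_pos (hf i hi).1 (hf i hi).2
  have h1 : γ ≤ ∏ i ∈ s, (f i).toReal := by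
    calc γ = Real.exp (Real.log γ) := (Real.exp_log hγ).symm
    _ ≤ Real.exp (∑ i ∈ s, Real.log (f i).toReal) := Real.exp_le_exp.2 h
    _ = ∏ i ∈ s, Real.exp (Real.log (f i).toReal) := Real.exp_sum s _
    _ = ∏ i ∈ s, (f i).toReal := Finset.prod_congr rfl fun i hi => Real.exp_log (hpos i hi)
  calc ENNReal.ofReal γ
      ≤ ENNReal.ofReal (∏ i ∈ s, (f i).toReal) := ENNReal.ofReal_le_ofReal h1
    _ = ∏ i ∈ s, ENNReal.ofReal (f i).toReal :=
        ENNReal.ofReal_prod_of_nonneg fun i hi => (hpos i hi).le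
    _ = ∏ i ∈ s, f i := Finset.prod_congr rfl fun i hi => ENNReal.ofReal_toReal (hf i hi).2

lemma crossing_lemma {γ : ℝ} (hγ : 1 < γ) (ν' : ℕ∞) {ω : ℕ → E}
    (hG : ω ∈ GoodSet μ0 μC μB) {t : ℕ}
    (hTS : TS μ0 μC μB (Real.log γ) (Real.log γ) ω = (t : ℕ∞)) :
    ENNReal.ofReal γ ≤ ZP μ0 μB (Real.log γ) ν' (ellF μ0 μC μB ν') t ω := by
  have hb : 0 < Real.log γ := Real.log_pos hγ
  obtain ⟨⟨hlt, hd⟩, -⟩ := (TS_eq_coe_iff (Real.log γ) (Real.log γ) ω t).1 hTS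
  obtain ⟨n, hn, hnt⟩ := enat_exists_coe_of_lt_coe hlt
  obtain ⟨⟨hn1, hcW⟩, -⟩ := (TW_eq_coe_iff (Real.log γ) ω n).1 hn
  rw [hn, ENat.toNat_coe] at hd
  unfold ZP
  rw [if_pos hlt, hn, ENat.toNat_coe]
  by_cases hν : ((n : ℕ) : ℕ∞) < ν'
  · rw [if_pos hν]
    obtain ⟨j, hj1, hjn, hsum⟩ := exists_suffix_of_cusum n (Real.log γ) hb hcW
    have hprod : ENNReal.ofReal γ ≤
        ∏ i ∈ Finset.Icc j n, ellF μ0 μC μB ν' i (ω i) := by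
      have hmatch : ∀ i ∈ Finset.Icc j n,
          ellF μ0 μC μB ν' i (ω i) = μB.rnDeriv μ0 (ω i) := by
        intro i hi
        unfold ellF
        rw [if_pos (lt_of_le_of_lt
          (by exact_mod_cast (Finset.mem_Icc.1 hi).2 : ((i:ℕ):ℕ∞) ≤ ((n:ℕ):ℕ∞)) hν)]
      rw [Finset.prod_congr rfl hmatch]
      apply prod_ge_of_sum_log
      · intro i hi
        exact (hG i (le_trans hj1 (Finset.mem_Icc.1 hi).1)).1
      · linarith
      · exact hsum
    exact le_trans hprod (single_le_DSR (by omega) hjn ω)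
  · rw [if_neg hν]
    have hd' : Real.log γ ≤ cusum (fun i => Lstat μC μB (n + i) ω) (t - n) := hd
    obtain ⟨r, hr1, hrtn, hsum⟩ := exists_suffix_of_cusum (t - n) (Real.log γ) hb hd'
    have hre : ∑ i ∈ Finset.Icc r (t - n), Lstat μC μB (n + i) ω
        = ∑ j ∈ Finset.Icc (n + r) t, Lstat μC μB j ω := by
      have hIcc : Finset.Icc (n + r) t = (Finset.Icc r (t - n)).map (addLeftEmbedding n) := by
        rw [Finset.map_add_left_Icc]
        congr 1
        omega
      rw [hIcc, Finset.sum_map]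
      rfl
    have hprod : ENNReal.ofReal γ ≤
        ∏ i ∈ Finset.Icc (n + r) t, ellF μ0 μC μB ν' i (ω i) := by
      have hmatch : ∀ i ∈ Finset.Icc (n + r) t,
          ellF μ0 μC μB ν' i (ω i) = μB.rnDeriv μC (ω i) := by
        intro i hi
        unfold ellF
        rw [if_neg]
        have h1 : ((n:ℕ):ℕ∞) ≤ ((i:ℕ):ℕ∞) := by
          exact_mod_cast le_trans (Nat.le_add_right n r) (Finset.mem_Icc.1 hi).1
        exact not_lt.2 (le_trans (not_lt.1 hν) h1)
      rw [Finset.prod_congr rfl hmatch]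
      apply prod_ge_of_sum_log
      · intro i hi
        exact (hG i (by have := (Finset.mem_Icc.1 hi).1; omega)).2
      · linarith
      · show Real.log γ ≤ ∑ i ∈ Finset.Icc (n + r) t, Lstat μC μB i ω
        rw [← hre]; exact hsum
    exact le_trans hprod (single_le_DSR (by omega) (by
      have := (Finset.mem_Icc.1 (Finset.mem_Icc.2 ⟨le_rfl, le_rfl⟩ : n + r ∈ Finset.Icc (n+r) (n+r)))
      omega) ω)

end Crossing
section StepLemma

variable {μ0 μC μB : Measure E}

lemma step_lemma [Nonempty E] [IsProbabilityMeasure μB] {P : Measure (ℕ → E)}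
    (hind : iIndepFun (fun t (ω : ℕ → E) => ω t) P)
    {ν' : ℕ∞} (hmar : ∀ i, Measure.map (fun ω : ℕ → E => ω i) P = marF μ0 μC ν' i)
    (b0 bC : ℝ) (t : ℕ) :
    ∫⁻ ω, ({ω : ℕ → E | TS μ0 μC μB b0 bC ω ≤ (t : ℕ∞)}ᶜ).indicator
        (ZP μ0 μB b0 ν' (ellF μ0 μC μB ν') (t + 1)) ω ∂P ≤
      (∫⁻ ω, ({ω : ℕ → E | TS μ0 μC μB b0 bC ω ≤ (t : ℕ∞)}ᶜ).indicator
        (ZP μ0 μB b0 ν' (ellF μ0 μC μB ν') t) ω ∂P) +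
      P {ω : ℕ → E | TS μ0 μC μB b0 bC ω ≤ (t : ℕ∞)}ᶜ := by
  classical
  set ℓ : ℕ → E → ℝ≥0∞ := ellF μ0 μC μB ν' with hℓdef
  have hℓm : ∀ i, Measurable (ℓ i) := fun i => measurable_ellF ν' i
  set A : Set (ℕ → E) := {ω : ℕ → E | TS μ0 μC μB b0 bC ω ≤ (t : ℕ∞)}ᶜ with hAdef
  have hAmeas : MeasurableSet A := (measurableSet_TS_le b0 bC t).compl
  set B : Set (ℕ → E) := A ∩ {ω : ℕ → E | TW μ0 μB b0 ω ≤ (t : ℕ∞)}ᶜ with hBdef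
  have hBmeas : MeasurableSet B := hAmeas.inter (measurableSet_TW_le b0 t).compl
  set C : ℕ → Set (ℕ → E) := fun m => A ∩ {ω : ℕ → E | TW μ0 μB b0 ω = (m : ℕ∞)} with hCdef
  have hCmeas : ∀ m, MeasurableSet (C m) := fun m => hAmeas.inter (measurableSet_TW_eq b0 m)
  -- the partition identity
  have hpart : ∀ f : (ℕ → E) → ℝ≥0∞, A.indicator f = fun ω =>
      B.indicator f ω + ∑ m ∈ Finset.range (t + 1), (C m).indicator f ω := by
    intro f
    funext ω
    by_cases hA : ω ∈ A
    · by_cases hTW : TW μ0 μB b0 ω ≤ (t : ℕ∞)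
      · obtain ⟨m, hm, hmt⟩ := enat_exists_coe_of_lt_coe
          (lt_of_le_of_lt hTW (by exact_mod_cast Nat.lt_succ_self t))
        rw [Set.indicator_of_mem hA, Set.indicator_of_notMem
          (fun hc => hc.2 hTW), zero_add, Finset.sum_eq_single m]
        · rw [Set.indicator_of_mem (Set.mem_inter hA hm)]
        · intro k _ hk
          apply Set.indicator_of_notMem
          rintro ⟨-, hc⟩
          have hc' : ((k:ℕ):ℕ∞) = ((m:ℕ):ℕ∞) := by rw [← hc, hm]
          exact hk (by exact_mod_cast hc')
        · intro hc
          exact absurd (Finset.mem_range.2 hmt) hc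
      · rw [Set.indicator_of_mem hA, Set.indicator_of_mem (Set.mem_inter hA hTW), Finset.sum_eq_zero, add_zero]
        intro k hk
        apply Set.indicator_of_notMem
        rintro ⟨-, hc⟩
        exact hTW (le_of_eq_of_le hc (by exact_mod_cast Nat.lt_succ_iff.1 (Finset.mem_range.1 hk)))
    · rw [Set.indicator_of_notMem hA, Set.indicator_of_notMem (fun hc => hA hc.1),
        Finset.sum_eq_zero, add_zero]
      intro k _
      exact Set.indicator_of_notMem (fun hc => hA hc.1) f
  -- bound for the B part
  have hBbound : ∫⁻ ω, B.indicator (ZP μ0 μB b0 ν' ℓ (t + 1)) ω ∂P ≤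
      (∫⁻ ω, B.indicator (ZP μ0 μB b0 ν' ℓ t) ω ∂P) + P B := by
    have hrw : B.indicator (ZP μ0 μB b0 ν' ℓ (t + 1)) = fun ω =>
        B.indicator (fun ω => 1 + DSR ℓ 0 t ω) ω * ℓ (t + 1) (ω (t + 1)) := by
      funext ω
      by_cases hω : ω ∈ B
      · have hTW : ¬ TW μ0 μB b0 ω ≤ (t : ℕ∞) := hω.2
        have hTW' : ¬ TW μ0 μB b0 ω < ((t + 1 : ℕ) : ℕ∞) := by
          intro hc
          obtain ⟨m, hm, hmt⟩ := enat_exists_coe_of_lt_coe hc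
          exact hTW (le_of_eq_of_le hm (by exact_mod_cast Nat.lt_succ_iff.1 hmt))
        rw [Set.indicator_of_mem hω, Set.indicator_of_mem hω]
        unfold ZP
        rw [if_neg hTW', DSR_succ ℓ (Nat.zero_le t) ω]
        ring
      · rw [Set.indicator_of_notMem hω, Set.indicator_of_notMem hω, zero_mul]
    have hdepB : DepOn (B.indicator (fun ω => 1 + DSR ℓ 0 t ω)) t := by
      intro ω ω' hag
      have hmem : ω ∈ B ↔ ω' ∈ B := by
        simp only [hBdef, hAdef, Set.mem_inter_iff, Set.mem_compl_iff, Set.mem_setOf_eq]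
        rw [TS_le_agree hag le_rfl, TW_le_agree hag le_rfl]
      by_cases h : ω ∈ B
      · rw [Set.indicator_of_mem h, Set.indicator_of_mem (hmem.1 h),
          depOn_DSR ℓ 0 t ω ω' hag]
      · rw [Set.indicator_of_notMem h, Set.indicator_of_notMem (fun hc => h (hmem.2 hc))]
    have hFmeas : Measurable (B.indicator (fun ω => 1 + DSR ℓ 0 t ω)) :=
      (measurable_const.add (measurable_DSR hℓm 0 t)).indicator hBmeas
    rw [hrw, lintegral_mul_eval hind t hFmeas hdepB (hℓm (t + 1))]
    have hgle : ∫⁻ ω, ℓ (t + 1) (ω (t + 1)) ∂P ≤ 1 := by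
      rw [lintegral_eval (hmar (t + 1)) (hℓm (t + 1))]
      exact lintegral_ellF_le ν' (t + 1)
    calc (∫⁻ ω, B.indicator (fun ω => 1 + DSR ℓ 0 t ω) ω ∂P) *
          ∫⁻ ω, ℓ (t + 1) (ω (t + 1)) ∂P
        ≤ (∫⁻ ω, B.indicator (fun ω => 1 + DSR ℓ 0 t ω) ω ∂P) * 1 :=
          mul_le_mul_right hgle _
      _ = ∫⁻ ω, (B.indicator (fun _ => 1) ω + B.indicator (DSR ℓ 0 t) ω) ∂P := by
          rw [mul_one]
          congr 1
          funext ω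
          by_cases h : ω ∈ B
          · rw [Set.indicator_of_mem h, Set.indicator_of_mem h, Set.indicator_of_mem h]
          · rw [Set.indicator_of_notMem h, Set.indicator_of_notMem h,
              Set.indicator_of_notMem h, add_zero]
      _ = P B + ∫⁻ ω, B.indicator (DSR ℓ 0 t) ω ∂P := by
          rw [lintegral_add_left (measurable_const.indicator hBmeas)]
          congr 1
          exact lintegral_indicator_one hBmeas
      _ = (∫⁻ ω, B.indicator (ZP μ0 μB b0 ν' ℓ t) ω ∂P) + P B := by
          rw [add_comm]
          congr 1
          congr 1
          funext ω
          by_cases h : ω ∈ B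
          · rw [Set.indicator_of_mem h, Set.indicator_of_mem h]
            have hTW : ¬ TW μ0 μB b0 ω < (t : ℕ∞) := fun hc => h.2 hc.le
            unfold ZP
            rw [if_neg hTW]
          · rw [Set.indicator_of_notMem h, Set.indicator_of_notMem h]
  -- bound for the C m parts
  have hCbound : ∀ m ∈ Finset.range (t + 1),
      ∫⁻ ω, (C m).indicator (ZP μ0 μB b0 ν' ℓ (t + 1)) ω ∂P ≤
        (∫⁻ ω, (C m).indicator (ZP μ0 μB b0 ν' ℓ t) ω ∂P) + P (C m) := by
    intro m hmr
    have hmt : m ≤ t := Nat.lt_succ_iff.1 (Finset.mem_range.1 hmr)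
    by_cases hν : ((m : ℕ) : ℕ∞) < ν'
    · -- frozen branch
      have heq : (C m).indicator (ZP μ0 μB b0 ν' ℓ (t + 1)) =
          (C m).indicator (ZP μ0 μB b0 ν' ℓ t) := by
        funext ω
        by_cases h : ω ∈ C m
        · have hTWm : TW μ0 μB b0 ω = (m : ℕ∞) := h.2
          have hlt1 : TW μ0 μB b0 ω < ((t + 1 : ℕ) : ℕ∞) := by
            rw [hTWm]; exact_mod_cast Nat.lt_succ_of_le hmt
          have hZ1 : ZP μ0 μB b0 ν' ℓ (t + 1) ω = DSR ℓ 0 m ω := by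
            unfold ZP
            rw [if_pos hlt1, hTWm, ENat.toNat_coe, if_pos hν]
          have hZ0 : ZP μ0 μB b0 ν' ℓ t ω = DSR ℓ 0 m ω := by
            unfold ZP
            rcases lt_or_eq_of_le hmt with hlt | heq2
            · have hlt2 : TW μ0 μB b0 ω < (t : ℕ∞) := by
                rw [hTWm]; exact_mod_cast hlt
              rw [if_pos hlt2, hTWm, ENat.toNat_coe, if_pos hν]
            · have hlt2 : ¬ TW μ0 μB b0 ω < (t : ℕ∞) := by
                rw [hTWm, heq2]; exact lt_irrefl _
              rw [if_neg hlt2, heq2]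
          rw [Set.indicator_of_mem h, Set.indicator_of_mem h, hZ1, hZ0]
        · rw [Set.indicator_of_notMem h, Set.indicator_of_notMem h]
      rw [heq]
      exact le_add_right le_rfl
    · -- live second-stage branch
      have hrw : (C m).indicator (ZP μ0 μB b0 ν' ℓ (t + 1)) = fun ω =>
          (C m).indicator (fun ω => 1 + DSR ℓ m t ω) ω * ℓ (t + 1) (ω (t + 1)) := by
        funext ω
        by_cases hω : ω ∈ C m
        · have hTWm : TW μ0 μB b0 ω = (m : ℕ∞) := hω.2
          have hlt1 : TW μ0 μB b0 ω < ((t + 1 : ℕ) : ℕ∞) := by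
            rw [hTWm]; exact_mod_cast Nat.lt_succ_of_le hmt
          rw [Set.indicator_of_mem hω, Set.indicator_of_mem hω]
          unfold ZP
          rw [if_pos hlt1, hTWm, ENat.toNat_coe, if_neg hν, DSR_succ ℓ hmt ω]
          ring
        · rw [Set.indicator_of_notMem hω, Set.indicator_of_notMem hω, zero_mul]
      have hdepC : DepOn ((C m).indicator (fun ω => 1 + DSR ℓ m t ω)) t := by
        intro ω ω' hag
        have hmem : ω ∈ C m ↔ ω' ∈ C m := by
          simp only [hCdef, hAdef, Set.mem_inter_iff, Set.mem_compl_iff, Set.mem_setOf_eq]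
          rw [TS_le_agree hag le_rfl, TW_eq_agree hag hmt]
        by_cases h : ω ∈ C m
        · rw [Set.indicator_of_mem h, Set.indicator_of_mem (hmem.1 h),
            depOn_DSR ℓ m t ω ω' hag]
        · rw [Set.indicator_of_notMem h, Set.indicator_of_notMem (fun hc => h (hmem.2 hc))]
      have hFmeas : Measurable ((C m).indicator (fun ω => 1 + DSR ℓ m t ω)) :=
        (measurable_const.add (measurable_DSR hℓm m t)).indicator (hCmeas m)
      rw [hrw, lintegral_mul_eval hind t hFmeas hdepC (hℓm (t + 1))]
      have hgle : ∫⁻ ω, ℓ (t + 1) (ω (t + 1)) ∂P ≤ 1 := by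
        rw [lintegral_eval (hmar (t + 1)) (hℓm (t + 1))]
        exact lintegral_ellF_le ν' (t + 1)
      calc (∫⁻ ω, (C m).indicator (fun ω => 1 + DSR ℓ m t ω) ω ∂P) *
            ∫⁻ ω, ℓ (t + 1) (ω (t + 1)) ∂P
          ≤ (∫⁻ ω, (C m).indicator (fun ω => 1 + DSR ℓ m t ω) ω ∂P) * 1 :=
            mul_le_mul_right hgle _
        _ = ∫⁻ ω, ((C m).indicator (fun _ => 1) ω + (C m).indicator (DSR ℓ m t) ω) ∂P := by
            rw [mul_one]
            congr 1
            funext ω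
            by_cases h : ω ∈ C m
            · rw [Set.indicator_of_mem h, Set.indicator_of_mem h, Set.indicator_of_mem h]
            · rw [Set.indicator_of_notMem h, Set.indicator_of_notMem h,
                Set.indicator_of_notMem h, add_zero]
        _ = P (C m) + ∫⁻ ω, (C m).indicator (DSR ℓ m t) ω ∂P := by
            rw [lintegral_add_left (measurable_const.indicator (hCmeas m))]
            congr 1
            exact lintegral_indicator_one (hCmeas m)
        _ ≤ (∫⁻ ω, (C m).indicator (ZP μ0 μB b0 ν' ℓ t) ω ∂P) + P (C m) := by
            rw [add_comm (P (C m)) _]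
            refine add_le_add_left (lintegral_mono fun ω => ?_) _
            by_cases h : ω ∈ C m
            · rw [Set.indicator_of_mem h, Set.indicator_of_mem h]
              have hTWm : TW μ0 μB b0 ω = (m : ℕ∞) := h.2
              rcases lt_or_eq_of_le hmt with hlt | heq2
              · have hlt2 : TW μ0 μB b0 ω < (t : ℕ∞) := by
                  rw [hTWm]; exact_mod_cast hlt
                have hZ0 : ZP μ0 μB b0 ν' ℓ t ω = DSR ℓ m t ω := by
                  unfold ZP
                  rw [if_pos hlt2, hTWm, ENat.toNat_coe, if_neg hν]
                rw [hZ0]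
              · have hlt2 : ¬ TW μ0 μB b0 ω < (t : ℕ∞) := by
                  rw [hTWm, heq2]; exact lt_irrefl _
                have hZ0 : ZP μ0 μB b0 ν' ℓ t ω = DSR ℓ 0 t ω := by
                  unfold ZP
                  rw [if_neg hlt2]
                rw [hZ0]
                subst heq2
                rw [DSR_self]
                exact zero_le
            · rw [Set.indicator_of_notMem h, Set.indicator_of_notMem h]
  -- put everything together
  have hmeasZ1 : ∀ (D : Set (ℕ → E)), MeasurableSet D →
      Measurable (D.indicator (ZP μ0 μB b0 ν' ℓ (t + 1))) := fun D hD =>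
    (measurable_ZP hℓm b0 ν' (t + 1)).indicator hD
  have hmeasZ0 : ∀ (D : Set (ℕ → E)), MeasurableSet D →
      Measurable (D.indicator (ZP μ0 μB b0 ν' ℓ t)) := fun D hD =>
    (measurable_ZP hℓm b0 ν' t).indicator hD
  have hsplit1 : ∫⁻ ω, A.indicator (ZP μ0 μB b0 ν' ℓ (t + 1)) ω ∂P =
      (∫⁻ ω, B.indicator (ZP μ0 μB b0 ν' ℓ (t + 1)) ω ∂P) +
        ∑ m ∈ Finset.range (t + 1), ∫⁻ ω, (C m).indicator (ZP μ0 μB b0 ν' ℓ (t + 1)) ω ∂P := by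
    rw [hpart]
    rw [lintegral_add_left (hmeasZ1 B hBmeas)]
    congr 1
    rw [lintegral_finset_sum _ (fun m _ => hmeasZ1 (C m) (hCmeas m))]
  have hsplit0 : ∫⁻ ω, A.indicator (ZP μ0 μB b0 ν' ℓ t) ω ∂P =
      (∫⁻ ω, B.indicator (ZP μ0 μB b0 ν' ℓ t) ω ∂P) +
        ∑ m ∈ Finset.range (t + 1), ∫⁻ ω, (C m).indicator (ZP μ0 μB b0 ν' ℓ t) ω ∂P := by
    rw [hpart]
    rw [lintegral_add_left (hmeasZ0 B hBmeas)]
    congr 1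
    rw [lintegral_finset_sum _ (fun m _ => hmeasZ0 (C m) (hCmeas m))]
  have hsplitP : P A = P B + ∑ m ∈ Finset.range (t + 1), P (C m) := by
    have h1 : ∫⁻ ω, A.indicator (fun _ => (1 : ℝ≥0∞)) ω ∂P =
        (∫⁻ ω, B.indicator (fun _ => (1 : ℝ≥0∞)) ω ∂P) +
          ∑ m ∈ Finset.range (t + 1), ∫⁻ ω, (C m).indicator (fun _ => (1 : ℝ≥0∞)) ω ∂P := by
      rw [hpart]
      rw [lintegral_add_left (measurable_const.indicator hBmeas)]
      congr 1
      rw [lintegral_finset_sum _ (fun m _ => measurable_const.indicator (hCmeas m))]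
    have hone : ∀ (D : Set (ℕ → E)), MeasurableSet D →
        ∫⁻ ω, D.indicator (fun _ => (1 : ℝ≥0∞)) ω ∂P = P D := fun D hD =>
      lintegral_indicator_one hD
    rw [hone A hAmeas, hone B hBmeas,
      Finset.sum_congr rfl (fun m _ => hone (C m) (hCmeas m))] at h1
    exact h1
  rw [hsplit1, hsplit0, hsplitP]
  calc (∫⁻ ω, B.indicator (ZP μ0 μB b0 ν' ℓ (t + 1)) ω ∂P) +
        ∑ m ∈ Finset.range (t + 1), ∫⁻ ω, (C m).indicator (ZP μ0 μB b0 ν' ℓ (t + 1)) ω ∂P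
      ≤ ((∫⁻ ω, B.indicator (ZP μ0 μB b0 ν' ℓ t) ω ∂P) + P B) +
        ∑ m ∈ Finset.range (t + 1),
          ((∫⁻ ω, (C m).indicator (ZP μ0 μB b0 ν' ℓ t) ω ∂P) + P (C m)) :=
        add_le_add hBbound (Finset.sum_le_sum hCbound)
    _ = ((∫⁻ ω, B.indicator (ZP μ0 μB b0 ν' ℓ t) ω ∂P) +
          ∑ m ∈ Finset.range (t + 1), ∫⁻ ω, (C m).indicator (ZP μ0 μB b0 ν' ℓ t) ω ∂P) +
        (P B + ∑ m ∈ Finset.range (t + 1), P (C m)) := by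
        rw [Finset.sum_add_distrib]
        ring

end StepLemma
section CoreBound

variable {μ0 μC μB : Measure E}

lemma Zst_zero (b0 bC : ℝ) (ν' : ℕ∞) (ℓ : ℕ → E → ℝ≥0∞) (ω : ℕ → E) :
    Zst μ0 μC μB b0 bC ν' ℓ 0 ω = 0 := by
  have hZP0 : ∀ ω : ℕ → E, ZP μ0 μB b0 ν' ℓ 0 ω = 0 := by
    intro ω
    unfold ZP
    rw [if_neg (by exact_mod_cast not_lt.2 (zero_le)), DSR_zero]
  unfold Zst
  split_ifs with h
  · have h0 : TS μ0 μC μB b0 bC ω = ((0 : ℕ) : ℕ∞) := le_antisymm h (zero_le)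
    rw [h0, ENat.toNat_coe, hZP0]
  · rw [hZP0]

lemma Zst_succ_decomp (b0 bC : ℝ) (ν' : ℕ∞) (ℓ : ℕ → E → ℝ≥0∞) (n : ℕ) :
    Zst μ0 μC μB b0 bC ν' ℓ (n + 1) = fun ω =>
      ({ω : ℕ → E | TS μ0 μC μB b0 bC ω ≤ (n : ℕ∞)}).indicator
        (Zst μ0 μC μB b0 bC ν' ℓ n) ω +
      ({ω : ℕ → E | TS μ0 μC μB b0 bC ω ≤ (n : ℕ∞)}ᶜ).indicator
        (ZP μ0 μB b0 ν' ℓ (n + 1)) ω := by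
  funext ω
  by_cases h : TS μ0 μC μB b0 bC ω ≤ (n : ℕ∞)
  · rw [Set.indicator_of_mem (by exact h), Set.indicator_of_notMem (by simpa using h),
      add_zero]
    unfold Zst
    rw [if_pos (le_trans h (by exact_mod_cast Nat.le_succ n)), if_pos h]
  · rw [Set.indicator_of_notMem (by exact h), Set.indicator_of_mem (by simpa using h),
      zero_add]
    unfold Zst
    split_ifs with h2
    · have hTn : TS μ0 μC μB b0 bC ω = ((n + 1 : ℕ) : ℕ∞) := by
        obtain ⟨k, hk, hkn⟩ := enat_exists_coe_of_lt_coe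
          (lt_of_le_of_lt h2 (by exact_mod_cast Nat.lt_succ_self (n + 1)))
        have : ¬ k ≤ n := fun hc => h (le_of_eq_of_le hk (by exact_mod_cast hc))
        have : k = n + 1 := by omega
        rw [hk, this]
      rw [hTn, ENat.toNat_coe]
    · rfl

lemma Zst_self_decomp (b0 bC : ℝ) (ν' : ℕ∞) (ℓ : ℕ → E → ℝ≥0∞) (n : ℕ) :
    Zst μ0 μC μB b0 bC ν' ℓ n = fun ω =>
      ({ω : ℕ → E | TS μ0 μC μB b0 bC ω ≤ (n : ℕ∞)}).indicator
        (Zst μ0 μC μB b0 bC ν' ℓ n) ω +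
      ({ω : ℕ → E | TS μ0 μC μB b0 bC ω ≤ (n : ℕ∞)}ᶜ).indicator
        (ZP μ0 μB b0 ν' ℓ n) ω := by
  funext ω
  by_cases h : TS μ0 μC μB b0 bC ω ≤ (n : ℕ∞)
  · rw [Set.indicator_of_mem (by exact h), Set.indicator_of_notMem (by simpa using h),
      add_zero]
  · rw [Set.indicator_of_notMem (by exact h), Set.indicator_of_mem (by simpa using h),
      zero_add]
    unfold Zst
    rw [if_neg h]

lemma Zst_induction [Nonempty E] [IsProbabilityMeasure μB] {P : Measure (ℕ → E)}
    (hind : iIndepFun (fun t (ω : ℕ → E) => ω t) P)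
    {ν' : ℕ∞} (hmar : ∀ i, Measure.map (fun ω : ℕ → E => ω i) P = marF μ0 μC ν' i)
    (b0 bC : ℝ) (n : ℕ) :
    ∫⁻ ω, Zst μ0 μC μB b0 bC ν' (ellF μ0 μC μB ν') n ω ∂P ≤
      ∑ s ∈ Finset.range n, P {ω : ℕ → E | TS μ0 μC μB b0 bC ω ≤ (s : ℕ∞)}ᶜ := by
  set ℓ : ℕ → E → ℝ≥0∞ := ellF μ0 μC μB ν' with hℓdef
  have hℓm : ∀ i, Measurable (ℓ i) := fun i => measurable_ellF ν' i
  induction n with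
  | zero =>
    simp only [Finset.range_zero, Finset.sum_empty]
    have : ∀ ω, Zst μ0 μC μB b0 bC ν' ℓ 0 ω = 0 := Zst_zero b0 bC ν' ℓ
    rw [lintegral_congr this, lintegral_zero]
  | succ n ih =>
    have hT : MeasurableSet {ω : ℕ → E | TS μ0 μC μB b0 bC ω ≤ (n : ℕ∞)} :=
      measurableSet_TS_le b0 bC n
    have hsplit : ∫⁻ ω, Zst μ0 μC μB b0 bC ν' ℓ (n + 1) ω ∂P =
        (∫⁻ ω, ({ω : ℕ → E | TS μ0 μC μB b0 bC ω ≤ (n : ℕ∞)}).indicator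
          (Zst μ0 μC μB b0 bC ν' ℓ n) ω ∂P) +
        ∫⁻ ω, ({ω : ℕ → E | TS μ0 μC μB b0 bC ω ≤ (n : ℕ∞)}ᶜ).indicator
          (ZP μ0 μB b0 ν' ℓ (n + 1)) ω ∂P := by
      conv_lhs => rw [Zst_succ_decomp b0 bC ν' ℓ n]
      rw [lintegral_add_left ((measurable_Zst hℓm b0 bC ν' n).indicator hT)]
    have hsplit0 : ∫⁻ ω, Zst μ0 μC μB b0 bC ν' ℓ n ω ∂P =
        (∫⁻ ω, ({ω : ℕ → E | TS μ0 μC μB b0 bC ω ≤ (n : ℕ∞)}).indicator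
          (Zst μ0 μC μB b0 bC ν' ℓ n) ω ∂P) +
        ∫⁻ ω, ({ω : ℕ → E | TS μ0 μC μB b0 bC ω ≤ (n : ℕ∞)}ᶜ).indicator
          (ZP μ0 μB b0 ν' ℓ n) ω ∂P := by
      conv_lhs => rw [Zst_self_decomp b0 bC ν' ℓ n]
      rw [lintegral_add_left ((measurable_Zst hℓm b0 bC ν' n).indicator hT)]
    calc ∫⁻ ω, Zst μ0 μC μB b0 bC ν' ℓ (n + 1) ω ∂P
        ≤ (∫⁻ ω, ({ω : ℕ → E | TS μ0 μC μB b0 bC ω ≤ (n : ℕ∞)}).indicator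
            (Zst μ0 μC μB b0 bC ν' ℓ n) ω ∂P) +
          ((∫⁻ ω, ({ω : ℕ → E | TS μ0 μC μB b0 bC ω ≤ (n : ℕ∞)}ᶜ).indicator
            (ZP μ0 μB b0 ν' ℓ n) ω ∂P) +
            P {ω : ℕ → E | TS μ0 μC μB b0 bC ω ≤ (n : ℕ∞)}ᶜ) := by
          rw [hsplit]
          exact add_le_add_right (step_lemma hind hmar b0 bC n) _
      _ = (∫⁻ ω, Zst μ0 μC μB b0 bC ν' ℓ n ω ∂P) +
            P {ω : ℕ → E | TS μ0 μC μB b0 bC ω ≤ (n : ℕ∞)}ᶜ := by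
          rw [hsplit0, add_assoc]
      _ ≤ (∑ s ∈ Finset.range n, P {ω : ℕ → E | TS μ0 μC μB b0 bC ω ≤ (s : ℕ∞)}ᶜ) +
            P {ω : ℕ → E | TS μ0 μC μB b0 bC ω ≤ (n : ℕ∞)}ᶜ :=
          add_le_add_left ih _
      _ = ∑ s ∈ Finset.range (n + 1), P {ω : ℕ → E | TS μ0 μC μB b0 bC ω ≤ (s : ℕ∞)}ᶜ := by
          rw [Finset.sum_range_succ]

lemma sum_indicator_le_coe (b0 bC : ℝ) (n : ℕ) (ω : ℕ → E) :
    ∑ s ∈ Finset.range n, ({ω : ℕ → E | TS μ0 μC μB b0 bC ω ≤ (s : ℕ∞)}ᶜ).indicator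
        (fun _ => (1 : ℝ≥0∞)) ω ≤ ((TS μ0 μC μB b0 bC ω : ℕ∞) : ℝ≥0∞) := by
  classical
  rcases eq_or_ne (TS μ0 μC μB b0 bC ω) ⊤ with htop | hne
  · rw [htop]
    exact le_top
  · have hex : ∃ m : ℕ, TS μ0 μC μB b0 bC ω = (m : ℕ∞) := by
      lift (TS μ0 μC μB b0 bC ω) to ℕ using hne with k hk
      exact ⟨k, rfl⟩
    obtain ⟨k, hk⟩ := hex
    have hconv : ∀ s : ℕ, ({ω : ℕ → E | TS μ0 μC μB b0 bC ω ≤ (s : ℕ∞)}ᶜ).indicator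
        (fun _ => (1 : ℝ≥0∞)) ω = if ¬ k ≤ s then 1 else 0 := by
      intro s
      by_cases h : TS μ0 μC μB b0 bC ω ≤ (s : ℕ∞)
      · rw [Set.indicator_of_notMem (by simpa using h), if_neg]
        simp only [not_not]
        rw [hk] at h
        exact_mod_cast h
      · rw [Set.indicator_of_mem (by simpa using h), if_pos]
        intro hc
        exact h (le_of_eq_of_le hk (by exact_mod_cast hc))
    rw [Finset.sum_congr rfl fun s _ => hconv s, Finset.sum_boole]
    have hcard : ((Finset.range n).filter (fun s => ¬ k ≤ s)).card ≤ k := by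
      have hsub : (Finset.range n).filter (fun s => ¬ k ≤ s) ⊆ Finset.range k := by
        intro s hs
        simp only [Finset.mem_filter, Finset.mem_range, not_le] at hs ⊢
        exact hs.2
      simpa using Finset.card_le_card hsub
    rw [hk, ENat.toENNReal_coe]
    exact_mod_cast hcard

lemma sum_tail_le_expTime {P : Measure (ℕ → E)} (b0 bC : ℝ) (n : ℕ) :
    ∑ s ∈ Finset.range n, P {ω : ℕ → E | TS μ0 μC μB b0 bC ω ≤ (s : ℕ∞)}ᶜ ≤
      expTime P (TS μ0 μC μB b0 bC) := by
  have hle : ∀ ω : ℕ → E,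
      ∑ s ∈ Finset.range n, ({ω : ℕ → E | TS μ0 μC μB b0 bC ω ≤ (s : ℕ∞)}ᶜ).indicator
        (fun _ => (1 : ℝ≥0∞)) ω ≤ ((TS μ0 μC μB b0 bC ω : ℕ∞) : ℝ≥0∞) :=
    sum_indicator_le_coe b0 bC n
  calc ∑ s ∈ Finset.range n, P {ω : ℕ → E | TS μ0 μC μB b0 bC ω ≤ (s : ℕ∞)}ᶜ
      = ∫⁻ ω, ∑ s ∈ Finset.range n,
          ({ω : ℕ → E | TS μ0 μC μB b0 bC ω ≤ (s : ℕ∞)}ᶜ).indicator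
            (fun _ => (1 : ℝ≥0∞)) ω ∂P := by
        rw [lintegral_finset_sum _ (fun s _ =>
          measurable_const.indicator (measurableSet_TS_le b0 bC s).compl)]
        exact Finset.sum_congr rfl fun s _ =>
          (lintegral_indicator_one (measurableSet_TS_le b0 bC s).compl).symm
    _ ≤ ∫⁻ ω, ((TS μ0 μC μB b0 bC ω : ℕ∞) : ℝ≥0∞) ∂P := lintegral_mono hle
    _ = expTime P (TS μ0 μC μB b0 bC) := rfl

end CoreBound
section Final

variable {μ0 μC μB : Measure E}

lemma core_bound [Nonempty E]
    [IsProbabilityMeasure μ0] [IsProbabilityMeasure μC] [IsProbabilityMeasure μB]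
    (hac0C : μ0 ≪ μC) (hacC0 : μC ≪ μ0) (hac0B : μ0 ≪ μB) (hacB0 : μB ≪ μ0)
    (hacCB : μC ≪ μB) (hacBC : μB ≪ μC)
    {γ : ℝ} (hγ : 1 < γ) (ν' : ℕ∞) {P : Measure (ℕ → E)} [IsProbabilityMeasure P]
    (hind : iIndepFun (fun t (ω : ℕ → E) => ω t) P)
    (hmar : ∀ i, Measure.map (fun ω : ℕ → E => ω i) P = marF μ0 μC ν' i) :
    ENNReal.ofReal γ ≤ expTime P (TS μ0 μC μB (Real.log γ) (Real.log γ)) := by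
  classical
  set b : ℝ := Real.log γ with hbdef
  set ℓ : ℕ → E → ℝ≥0∞ := ellF μ0 μC μB ν' with hℓdef
  have hℓm : ∀ i, Measurable (ℓ i) := fun i => measurable_ellF ν' i
  have hGnull : P (GoodSet μ0 μC μB)ᶜ = 0 :=
    GoodSet_compl_null hmar hac0C hacC0 hac0B hacB0 hacCB hacBC
  have hGae : ∀ᵐ ω ∂P, ω ∈ GoodSet μ0 μC μB := ae_iff.2 hGnull
  -- key bound for each n
  have key : ∀ n : ℕ, ENNReal.ofReal γ * P {ω : ℕ → E | TS μ0 μC μB b b ω ≤ (n : ℕ∞)} ≤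
      expTime P (TS μ0 μC μB b b) := by
    intro n
    have hmeasU : MeasurableSet {ω : ℕ → E | TS μ0 μC μB b b ω ≤ (n : ℕ∞)} :=
      measurableSet_TS_le b b n
    have h1 : ENNReal.ofReal γ * P {ω : ℕ → E | TS μ0 μC μB b b ω ≤ (n : ℕ∞)} ≤
        ∫⁻ ω, Zst μ0 μC μB b b ν' ℓ n ω ∂P := by
      have hlow : ∫⁻ ω, ({ω : ℕ → E | TS μ0 μC μB b b ω ≤ (n : ℕ∞)}).indicator
          (fun _ => ENNReal.ofReal γ) ω ∂P =
          ENNReal.ofReal γ * P {ω : ℕ → E | TS μ0 μC μB b b ω ≤ (n : ℕ∞)} := by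
        rw [lintegral_indicator hmeasU, setLIntegral_const]
      rw [← hlow]
      apply lintegral_mono_ae
      filter_upwards [hGae] with ω hω
      by_cases h : TS μ0 μC μB b b ω ≤ (n : ℕ∞)
      · rw [Set.indicator_of_mem (by exact h)]
        have hne : TS μ0 μC μB b b ω ≠ ⊤ := fun hc => by
          rw [hc] at h
          exact absurd h (by simp)
        have hex : ∃ s : ℕ, TS μ0 μC μB b b ω = (s : ℕ∞) := by
          lift (TS μ0 μC μB b b ω) to ℕ using hne with k hk
          exact ⟨k, rfl⟩
        obtain ⟨s, hs⟩ := hex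
        have hcross := crossing_lemma hγ ν' hω hs
        unfold Zst
        rw [if_pos h, hs, ENat.toNat_coe]
        exact hcross
      · rw [Set.indicator_of_notMem (by exact h)]
        exact zero_le
    exact le_trans h1 (le_trans (Zst_induction hind hmar b b n)
      (sum_tail_le_expTime b b n))
  by_cases htop : P {ω : ℕ → E | TS μ0 μC μB b b ω = ⊤} = 0
  · have hmeasU : ∀ n : ℕ, MeasurableSet {ω : ℕ → E | TS μ0 μC μB b b ω ≤ (n : ℕ∞)} :=
      fun n => measurableSet_TS_le b b n
    have hcompl : (⋃ n : ℕ, {ω : ℕ → E | TS μ0 μC μB b b ω ≤ (n : ℕ∞)})ᶜ =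
        {ω : ℕ → E | TS μ0 μC μB b b ω = ⊤} := by
      ext ω
      simp only [Set.mem_compl_iff, Set.mem_iUnion, Set.mem_setOf_eq, not_exists]
      constructor
      · intro h
        by_contra hc
        have hex : ∃ s : ℕ, TS μ0 μC μB b b ω = (s : ℕ∞) := by
          lift (TS μ0 μC μB b b ω) to ℕ using hc with k hk
          exact ⟨k, rfl⟩
        obtain ⟨s, hs⟩ := hex
        exact h s (le_of_eq hs)
      · intro h n hc
        rw [h] at hc
        exact absurd hc (by simp)
    have hUnion : P (⋃ n : ℕ, {ω : ℕ → E | TS μ0 μC μB b b ω ≤ (n : ℕ∞)}) = 1 := by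
      have hadd := measure_add_measure_compl (μ := P)
        (MeasurableSet.iUnion fun n => hmeasU n)
      rw [hcompl, htop, add_zero, measure_univ] at hadd
      exact hadd
    have hmono : Monotone (fun n : ℕ => {ω : ℕ → E | TS μ0 μC μB b b ω ≤ (n : ℕ∞)}) := by
      intro a c hac ω hω
      simp only [Set.mem_setOf_eq] at hω ⊢
      exact le_trans hω (by exact_mod_cast hac)
    have hsup := Directed.measure_iUnion (μ := P) (hmono.directed_le)
    calc ENNReal.ofReal γ = ENNReal.ofReal γ * 1 := (mul_one _).symm
      _ = ENNReal.ofReal γ *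
          ⨆ n : ℕ, P {ω : ℕ → E | TS μ0 μC μB b b ω ≤ (n : ℕ∞)} := by
          rw [← hsup, hUnion]
      _ = ⨆ n : ℕ, ENNReal.ofReal γ *
          P {ω : ℕ → E | TS μ0 μC μB b b ω ≤ (n : ℕ∞)} := by
          rw [ENNReal.mul_iSup]
      _ ≤ expTime P (TS μ0 μC μB b b) := iSup_le key
  · have hmeasT : MeasurableSet {ω : ℕ → E | TS μ0 μC μB b b ω = ⊤} :=
      measurableSet_TS_top b b
    have htopint : (⊤ : ℝ≥0∞) ≤ expTime P (TS μ0 μC μB b b) := by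
      calc (⊤ : ℝ≥0∞) = ⊤ * P {ω : ℕ → E | TS μ0 μC μB b b ω = ⊤} :=
            (ENNReal.top_mul htop).symm
        _ = ∫⁻ ω, ({ω : ℕ → E | TS μ0 μC μB b b ω = ⊤}).indicator
              (fun _ => (⊤ : ℝ≥0∞)) ω ∂P := by
            rw [lintegral_indicator hmeasT, setLIntegral_const]
        _ ≤ ∫⁻ ω, ((TS μ0 μC μB b b ω : ℕ∞) : ℝ≥0∞) ∂P := by
            apply lintegral_mono
            intro ω
            by_cases h : TS μ0 μC μB b b ω = ⊤
            · have hmem : ω ∈ {ω : ℕ → E | TS μ0 μC μB b b ω = ⊤} := h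
              rw [Set.indicator_of_mem hmem]
              show (⊤ : ℝ≥0∞) ≤ ((TS μ0 μC μB b b ω : ℕ∞) : ℝ≥0∞)
              rw [h]
              simp
            · rw [Set.indicator_of_notMem (by exact h)]
              exact zero_le
        _ = expTime P (TS μ0 μC μB b b) := rfl
    exact le_trans le_top htopint

lemma expTime_ge_one {P : Measure (ℕ → E)} [IsProbabilityMeasure P] (b0 bC : ℝ) :
    1 ≤ expTime P (TS μ0 μC μB b0 bC) := by
  have hpt : ∀ ω : ℕ → E, (1 : ℝ≥0∞) ≤ ((TS μ0 μC μB b0 bC ω : ℕ∞) : ℝ≥0∞) := by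
    intro ω
    rcases eq_or_ne (TS μ0 μC μB b0 bC ω) ⊤ with h | h
    · rw [h]; simp
    · have hex : ∃ s : ℕ, TS μ0 μC μB b0 bC ω = (s : ℕ∞) := by
        lift (TS μ0 μC μB b0 bC ω) to ℕ using h with k hk
        exact ⟨k, rfl⟩
      obtain ⟨s, hs⟩ := hex
      obtain ⟨⟨hlt, -⟩, -⟩ := (TS_eq_coe_iff b0 bC ω s).1 hs
      have hs1 : 1 ≤ s := by
        rcases Nat.eq_zero_or_pos s with rfl | hpos
        · exact absurd hlt (by exact_mod_cast not_lt.2 (zero_le))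
        · exact hpos
      rw [hs, ENat.toENNReal_coe]
      exact_mod_cast hs1
  calc (1 : ℝ≥0∞) = ∫⁻ _, (1 : ℝ≥0∞) ∂P := by rw [lintegral_one, measure_univ]
    _ ≤ expTime P (TS μ0 μC μB b0 bC) := lintegral_mono hpt

end Final
/-- **S-CuSum false alarm lower bound.** For every `γ ≥ 1`, the S-CuSum stopping time
with thresholds `b0 = bC = log γ` satisfies `E_∞[T_S] ≥ γ` and
`inf_{ν ≥ 1} E_{ν,μC}[T_S] ≥ γ`. -/
theorem sCusum_false_alarm_lower_bound
    [StandardBorelSpace E]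
    (μ0 μC μB : Measure E)
    [IsProbabilityMeasure μ0] [IsProbabilityMeasure μC] [IsProbabilityMeasure μB]
    (hne0C : μ0 ≠ μC) (hne0B : μ0 ≠ μB) (hneCB : μC ≠ μB)
    (hac0C : μ0 ≪ μC) (hacC0 : μC ≪ μ0) (hac0B : μ0 ≪ μB) (hacB0 : μB ≪ μ0)
    (hacCB : μC ≪ μB) (hacBC : μB ≪ μC)
    (hKL0C : FinKL μ0 μC) (hKLC0 : FinKL μC μ0) (hKL0B : FinKL μ0 μB)
    (hKLB0 : FinKL μB μ0) (hKLCB : FinKL μC μB) (hKLBC : FinKL μB μC)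
    (γ : ℝ) (hγ : 1 ≤ γ) :
    (∀ Pinf : Measure (ℕ → E), IsChangeMeasure μ0 μ0 1 Pinf →
      ENNReal.ofReal γ ≤ expTime Pinf (TS μ0 μC μB (Real.log γ) (Real.log γ))) ∧
    (∀ ν : ℕ, 1 ≤ ν → ∀ P : Measure (ℕ → E), IsChangeMeasure μ0 μC ν P →
      ENNReal.ofReal γ ≤ expTime P (TS μ0 μC μB (Real.log γ) (Real.log γ))) := by
  have hNE : Nonempty E := by
    by_contra hE
    rw [not_nonempty_iff] at hE
    have h1 : μ0 Set.univ = 1 := measure_univ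
    rw [Set.univ_eq_empty_iff.2 hE, measure_empty] at h1
    exact zero_ne_one h1
  constructor
  · rintro Pinf ⟨hP, hm, hi⟩
    haveI := hP
    rcases eq_or_lt_of_le hγ with heq | hγ'
    · rw [← heq]
      calc ENNReal.ofReal 1 = 1 := ENNReal.ofReal_one
        _ ≤ expTime Pinf (TS μ0 μC μB (Real.log 1) (Real.log 1)) :=
          expTime_ge_one (Real.log 1) (Real.log 1)
    · refine core_bound hac0C hacC0 hac0B hacB0 hacCB hacBC hγ' (⊤ : ℕ∞) hi ?_
      intro i
      have h2 : marF μ0 μC (⊤ : ℕ∞) i = μ0 := by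
        unfold marF
        rw [if_pos (by simp : ((i : ℕ) : ℕ∞) < ⊤)]
      rw [hm i, h2, ite_self]
  · rintro ν hν P ⟨hP, hm, hi⟩
    haveI := hP
    rcases eq_or_lt_of_le hγ with heq | hγ'
    · rw [← heq]
      calc ENNReal.ofReal 1 = 1 := ENNReal.ofReal_one
        _ ≤ expTime P (TS μ0 μC μB (Real.log 1) (Real.log 1)) :=
          expTime_ge_one (Real.log 1) (Real.log 1)
    · refine core_bound hac0C hacC0 hac0B hacB0 hacCB hacBC hγ' ((ν : ℕ) : ℕ∞) hi ?_
      intro i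
      rw [hm i]
      unfold marF
      by_cases h : i < ν
      · rw [if_pos h, if_pos (by exact_mod_cast h)]
      · rw [if_neg h, if_neg (by exact_mod_cast h)]

end QCDStmt
end
end

section
/- Let T be a random variable on a probability space taking values in {1, 2, …} ∪ {∞}, let α be a positive integer, and let γ be a real number with α ≤ γ. If P[T ≥ ν + α ∣ T ≥ ν] ≤ 1 − α/γ for every integer ν ≥ 1 with P[T ≥ ν] > 0, then E[T] ≤ γ. -/
open MeasureTheory
open scoped ENNReal

noncomputable section

lemma coe_eq_tsum_ite (m : ℕ∞) :
    ((m : ℝ≥0∞)) = ∑' n : ℕ, (if ((n+1:ℕ):ℕ∞) ≤ m then (1:ℝ≥0∞) else 0) := by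
  cases m with
  | top =>
    simp only [le_top, if_true]
    rw [ENNReal.tsum_const_eq_top_of_ne_zero one_ne_zero]; rfl
  | coe k =>
    rw [tsum_eq_sum (s := Finset.range k) (by
      intro n hn; simp at hn ⊢
      exact_mod_cast (by omega : (k:ℕ) < n + 1))]
    rw [Finset.sum_ite_of_true (by
      intro n hn; simp at hn
      exact_mod_cast (by omega : n + 1 ≤ k))]
    simp

/-- If `T` takes values in `{1, 2, …} ∪ {∞}`, `α` is a positive integer, `γ ∈ ℝ` with
`α ≤ γ`, and `P[T ≥ ν + α ∣ T ≥ ν] ≤ 1 − α/γ` for every `ν ≥ 1` with `P[T ≥ ν] > 0`,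
then `E[T] ≤ γ`. -/
theorem expectation_le_of_conditional_tail_bound
    {Ω : Type*} [MeasurableSpace Ω] (P : Measure Ω) [IsProbabilityMeasure P]
    (T : Ω → ℕ∞) (hTmeas : Measurable T) (hT1 : ∀ ω, 1 ≤ T ω)
    (α : ℕ) (hα : 0 < α) (γ : ℝ) (hαγ : (α : ℝ) ≤ γ)
    (hcond : ∀ ν : ℕ, 1 ≤ ν → 0 < P {ω | (ν : ℕ∞) ≤ T ω} →
      P {ω | ((ν + α : ℕ) : ℕ∞) ≤ T ω} / P {ω | (ν : ℕ∞) ≤ T ω} ≤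
        ENNReal.ofReal (1 - (α : ℝ) / γ)) :
    ∫⁻ ω, (T ω : ℝ≥0∞) ∂P ≤ ENNReal.ofReal γ := by
  classical
  have hγpos : (0:ℝ) < γ := lt_of_lt_of_le (by exact_mod_cast hα) hαγ
  set r : ℝ≥0∞ := ENNReal.ofReal (1 - (α:ℝ)/γ) with hr
  have hmeas : ∀ n : ℕ, MeasurableSet {ω | (n : ℕ∞) ≤ T ω} := fun n =>
    hTmeas ((Set.to_countable {m : ℕ∞ | (n:ℕ∞) ≤ m}).measurableSet)
  have hmono : ∀ {a b : ℕ}, a ≤ b →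
      P {ω | (b:ℕ∞) ≤ T ω} ≤ P {ω | (a:ℕ∞) ≤ T ω} := by
    intro a b hab
    apply measure_mono
    intro ω hω
    exact le_trans (show (a:ℕ∞) ≤ (b:ℕ∞) by exact_mod_cast hab) hω
  -- geometric tail bound
  have htail : ∀ k : ℕ, P {ω | ((1 + k*α : ℕ):ℕ∞) ≤ T ω} ≤ r ^ k := by
    intro k; induction k with
    | zero => simpa using prob_le_one
    | succ k ih =>
      have hstep : (1 + (k+1)*α : ℕ) = (1 + k*α) + α := by ring
      rw [hstep]
      rcases eq_or_lt_of_le (show (0:ℝ≥0∞) ≤ P {ω | ((1+k*α:ℕ):ℕ∞) ≤ T ω} from zero_le) with h0 | hpos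
      · calc P {ω | (((1+k*α) + α : ℕ):ℕ∞) ≤ T ω}
            ≤ P {ω | ((1+k*α:ℕ):ℕ∞) ≤ T ω} := hmono (by omega)
          _ = 0 := h0.symm
          _ ≤ r^(k+1) := zero_le
      · have hne : P {ω | ((1+k*α:ℕ):ℕ∞) ≤ T ω} ≠ 0 := hpos.ne'
        have hnt : P {ω | ((1+k*α:ℕ):ℕ∞) ≤ T ω} ≠ ⊤ := measure_ne_top _ _
        have h := hcond (1+k*α) (by omega) hpos
        rw [ENNReal.div_le_iff hne hnt] at h
        calc P {ω | (((1+k*α) + α : ℕ):ℕ∞) ≤ T ω}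
            ≤ r * P {ω | ((1+k*α:ℕ):ℕ∞) ≤ T ω} := h
          _ ≤ r * r^k := mul_le_mul_right ih r
          _ = r^(k+1) := by ring
  have hbound : ∀ n : ℕ, P {ω | ((n+1:ℕ):ℕ∞) ≤ T ω} ≤ r ^ (n / α) := fun n =>
    le_trans (hmono (by have := Nat.div_mul_le_self n α; omega)) (htail (n / α))
  -- layer cake
  have key : (∫⁻ ω, (T ω : ℝ≥0∞) ∂P) = ∑' n : ℕ, P {ω | ((n+1:ℕ):ℕ∞) ≤ T ω} := by
    have hpt : ∀ ω, (T ω : ℝ≥0∞)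
        = ∑' n : ℕ, Set.indicator {ω' | ((n+1:ℕ):ℕ∞) ≤ T ω'} (fun _ => (1:ℝ≥0∞)) ω := by
      intro ω
      rw [coe_eq_tsum_ite (T ω)]
      congr 1; funext n
      simp [Set.indicator_apply]
    calc ∫⁻ ω, (T ω : ℝ≥0∞) ∂P
        = ∫⁻ ω, ∑' n : ℕ, Set.indicator {ω' | ((n+1:ℕ):ℕ∞) ≤ T ω'} (fun _ => (1:ℝ≥0∞)) ω ∂P := by
          exact lintegral_congr hpt
      _ = ∑' n : ℕ, ∫⁻ ω, Set.indicator {ω' | ((n+1:ℕ):ℕ∞) ≤ T ω'} (fun _ => (1:ℝ≥0∞)) ω ∂P :=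
          lintegral_tsum (fun n => (measurable_one.indicator (hmeas (n+1))).aemeasurable)
      _ = ∑' n : ℕ, P {ω | ((n+1:ℕ):ℕ∞) ≤ T ω} := by
          congr 1; funext n
          exact lintegral_indicator_one (hmeas (n+1))
  rw [key]
  haveI : NeZero α := ⟨hα.ne'⟩
  -- sum the geometric bound
  have hsum : ∑' n : ℕ, r ^ (n / α) = (α : ℝ≥0∞) * (1 - r)⁻¹ := by
    have h1 : ∑' n : ℕ, r ^ (n / α) = ∑' p : ℕ × Fin α, r ^ p.1 := by
      rw [← ((Nat.divModEquiv α).symm).tsum_eq (fun n => r ^ (n / α))]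
      congr 1; funext p
      congr 1
      show (p.1 * α + (p.2 : ℕ)) / α = p.1
      rw [mul_comm, Nat.mul_add_div hα, Nat.div_eq_of_lt p.2.isLt, add_zero]
    have h2 : ∑' p : ℕ × Fin α, r ^ p.1 = ∑' k : ℕ, ∑' _ : Fin α, r ^ k :=
      ENNReal.tsum_prod (f := fun k (_ : Fin α) => r ^ k)
    have h3 : ∀ k : ℕ, ∑' _ : Fin α, r ^ k = (α : ℝ≥0∞) * r ^ k := by
      intro k
      rw [tsum_fintype]
      simp [Finset.sum_const, nsmul_eq_mul]
    rw [h1, h2]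
    simp_rw [h3]
    rw [ENNReal.tsum_mul_left, ENNReal.tsum_geometric]
  have h1r : (1:ℝ≥0∞) - r = ENNReal.ofReal ((α:ℝ)/γ) := by
    have hle1 : (α:ℝ)/γ ≤ 1 := (div_le_one hγpos).mpr hαγ
    rw [hr, ← ENNReal.ofReal_one, ← ENNReal.ofReal_sub _ (by linarith)]
    norm_num
  calc ∑' n : ℕ, P {ω | ((n+1:ℕ):ℕ∞) ≤ T ω}
      ≤ ∑' n : ℕ, r ^ (n / α) := ENNReal.tsum_le_tsum hbound
    _ = (α : ℝ≥0∞) * (1 - r)⁻¹ := hsum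
    _ = ENNReal.ofReal ((α:ℝ)) / ENNReal.ofReal ((α:ℝ)/γ) := by
        rw [h1r, div_eq_mul_inv, ENNReal.ofReal_natCast]
        rfl
    _ = ENNReal.ofReal ((α:ℝ) / ((α:ℝ)/γ)) := (ENNReal.ofReal_div_of_pos (by positivity)).symm
    _ = ENNReal.ofReal γ := by
        congr 1
        field_simp
end
end
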